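/- arXiv:1711.01636 — 4 statements merged into one kernel-verified Lean document; each statement's English description precedes it below -/
import Mathlib

section
/- For every k ≥ 1, the collection C_k = {C(x) : x a Dyck word of length 2k}, where C(x) is obtained from the path P(x) by adding the edge {x, x̄}, is a cycle factor of the graph G_k^+: the cycles are vertex-disjoint, each has length 2k+1, and together they cover all vertices of G_k^+. -/
/-- `x ∈ B_k`: bitstring of length `2k` with weight `k` or `k+1`. -/
def inB (k : ℕ) (x : List Bool) : Prop :=
  x.length = 2*k ∧ (x.count true = k ∨ x.count true = k+1)

/-- Dyck word: equally many 1s and 0s, every prefix has at least as many 1s as 0s. -/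
def isDyck (x : List Bool) : Prop :=
  x.count true = x.count false ∧ ∀ n, (x.take n).count false ≤ (x.take n).count true

/-- Complement of the reverse. -/
def mirror (x : List Bool) : List Bool := x.reverse.map (fun b => !b)

/-- Bitwise complement. -/
def compl (x : List Bool) : List Bool := x.map (fun b => !b)

/-- Specification of the recursively defined bit-flip sequence `π`. -/
def IsPiFun (π : List Bool → List ℕ) : Prop :=
  π [] = [] ∧ ∀ u v : List Bool, isDyck u → isDyck v →
    π (true :: u ++ false :: v) =
      (u.length + 2) :: ((π (mirror u)).map (fun a => u.length + 2 - a))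
        ++ 1 :: ((π v).map (fun a => u.length + 2 + a))

/-- Flip the bit at (1-indexed) position `a`. -/
def flipBit (y : List Bool) (a : ℕ) : List Bool := y.set (a-1) (!(y.getD (a-1) false))

/-- The path `P(x)`, as the list of vertices obtained by flipping bits in order `π x`. -/
def pathOf (π : List Bool → List ℕ) (x : List Bool) : List (List Bool) :=
  List.scanl flipBit x (π x)

/-- Adjacency in `G_k`: both vertices in `B_k`, differing in exactly one position. -/
def GkAdj (k : ℕ) (x y : List Bool) : Prop :=
  inB k x ∧ inB k y ∧ (List.range (2*k)).countP (fun i => x.getD i false != y.getD i false) = 1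

/-- Adjacency in `G_k^+`: a `G_k` edge or a complement edge. -/
def GkPlusAdj (k : ℕ) (x y : List Bool) : Prop :=
  GkAdj k x y ∨ (inB k x ∧ inB k y ∧ (y = compl x ∨ x = compl y))

namespace SA

lemma compl_def (x : List Bool) : compl x = x.map (fun b => !b) := rfl
lemma mirror_def (x : List Bool) : mirror x = x.reverse.map (fun b => !b) := rfl

lemma count_tf (l : List Bool) : l.count true + l.count false = l.length := by
  induction l with
  | nil => simp
  | cons b t ih => cases b <;> simp [List.count_cons] <;> omega

lemma bnot_inj : Function.Injective (fun b : Bool => !b) := by decide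

lemma count_true_compl (x : List Bool) : (compl x).count true = x.count false := by
  simpa [compl_def] using List.count_map_of_injective x (fun b => !b) bnot_inj false

lemma count_false_compl (x : List Bool) : (compl x).count false = x.count true := by
  simpa [compl_def] using List.count_map_of_injective x (fun b => !b) bnot_inj true

lemma length_compl (x : List Bool) : (compl x).length = x.length := by simp [compl_def]

lemma length_mirror (x : List Bool) : (mirror x).length = x.length := by simp [mirror_def]

lemma count_true_mirror (x : List Bool) : (mirror x).count true = x.count false := by
  have := List.count_map_of_injective x.reverse (fun b => !b) bnot_inj false
  simpa [mirror_def, List.count_reverse] using this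

lemma count_false_mirror (x : List Bool) : (mirror x).count false = x.count true := by
  have := List.count_map_of_injective x.reverse (fun b => !b) bnot_inj true
  simpa [mirror_def, List.count_reverse] using this

lemma compl_compl (x : List Bool) : compl (compl x) = x := by
  simp [compl_def, List.map_map, Function.comp_def, Bool.not_not]

lemma mirror_mirror (x : List Bool) : mirror (mirror x) = x := by
  simp [mirror_def, ← List.map_reverse, List.reverse_reverse, List.map_map, Function.comp_def,
    Bool.not_not]

lemma reverse_mirror (x : List Bool) : (mirror x).reverse = compl x := by
  simp [mirror_def, compl_def, List.map_reverse, List.reverse_reverse]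

lemma mirror_compl (x : List Bool) : mirror (compl x) = x.reverse := by
  simp [mirror_def, compl_def, ← List.map_reverse, List.map_map, Function.comp_def, Bool.not_not]

lemma getElem_mirror (x : List Bool) (i : ℕ) (h : i < x.length) :
    (mirror x)[i]'(by simpa [length_mirror] using h) = !(x[x.length - 1 - i]'(by omega)) := by
  simp [mirror_def, List.getElem_map, List.getElem_reverse]

lemma count_take_drop (b : Bool) (x : List Bool) (n : ℕ) :
    (x.take n).count b + (x.drop n).count b = x.count b := by
  conv_rhs => rw [← List.take_append_drop n x]
  rw [List.count_append]

lemma isDyck_nil : isDyck [] := ⟨rfl, fun n => by simp⟩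

def antiDyck (x : List Bool) : Prop :=
  x.count true = x.count false ∧ ∀ n, (x.take n).count true ≤ (x.take n).count false

lemma take_compl (x : List Bool) (n : ℕ) : (compl x).take n = compl (x.take n) := by
  simp [compl_def, List.map_take]

lemma antiDyck_compl {x : List Bool} (h : isDyck x) : antiDyck (compl x) := by
  refine ⟨by rw [count_true_compl, count_false_compl, h.1], fun n => ?_⟩
  rw [take_compl, count_true_compl, count_false_compl]
  exact h.2 n

lemma isDyck_compl {x : List Bool} (h : antiDyck x) : isDyck (compl x) := by
  refine ⟨by rw [count_true_compl, count_false_compl, h.1], fun n => ?_⟩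
  rw [take_compl, count_true_compl, count_false_compl]
  exact h.2 n

lemma isDyck_mirror {u : List Bool} (h : isDyck u) : isDyck (mirror u) := by
  obtain ⟨h1, h2⟩ := h
  constructor
  · rw [count_true_mirror, count_false_mirror, h1]
  · intro n
    rcases le_or_gt n u.length with hn | hn
    · have e : (mirror u).take n = ((u.drop (u.length - n)).reverse).map (fun b => !b) := by
        simp only [mirror_def, ← List.map_take, List.take_reverse]
      have ct : (((u.drop (u.length - n)).reverse).map (fun b => !b)).count true
          = (u.drop (u.length - n)).count false := by
        have := List.count_map_of_injective (u.drop (u.length - n)).reverse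
          (fun b => !b) bnot_inj false
        simpa [List.count_reverse] using this
      have cf : (((u.drop (u.length - n)).reverse).map (fun b => !b)).count false
          = (u.drop (u.length - n)).count true := by
        have := List.count_map_of_injective (u.drop (u.length - n)).reverse
          (fun b => !b) bnot_inj true
        simpa [List.count_reverse] using this
      rw [e, ct, cf]
      have hT := count_take_drop true u (u.length - n)
      have hF := count_take_drop false u (u.length - n)
      have hp := h2 (u.length - n)
      omega
    · rw [List.take_of_length_le (by rw [length_mirror]; omega)]
      rw [count_true_mirror, count_false_mirror, h1]

lemma isDyck_compose {u v : List Bool} (hu : isDyck u) (hv : isDyck v) :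
    isDyck ((true :: u) ++ false :: v) := by
  obtain ⟨hub, hup⟩ := hu; obtain ⟨hvb, hvp⟩ := hv
  constructor
  · simp [List.count_append, List.count_cons]; omega
  · intro n
    cases n with
    | zero => simp
    | succ n =>
      rw [show ((true :: u) ++ false :: v) = true :: (u ++ false :: v) from by simp,
        List.take_succ_cons, List.take_append]
      rcases Nat.lt_or_ge n u.length with h | h
      · have h0 : n - u.length = 0 := by omega
        rw [h0]
        simp only [List.take_zero, List.append_nil, List.count_cons]
        have := hup n
        simp [List.count_cons]
        omega
      · rw [List.take_of_length_le h]
        rcases Nat.eq_zero_or_pos (n - u.length) with h0 | h0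
        · rw [h0]
          simp only [List.take_zero, List.append_nil]
          have := hup u.length
          rw [List.take_of_length_le (le_refl _)] at this
          simp [List.count_cons, List.count_append]
          omega
        · rw [show n - u.length = (n - u.length - 1) + 1 from by omega, List.take_succ_cons]
          have := hvp (n - u.length - 1)
          simp [List.count_cons, List.count_append]
          omega

lemma dyck_head {x : List Bool} (h : isDyck x) (hne : x ≠ []) : ∃ z, x = true :: z := by
  cases x with
  | nil => exact absurd rfl hne
  | cons b z =>
    cases b
    · have h1 := h.2 1
      simp [List.count_cons] at h1
    · exact ⟨z, rfl⟩

lemma dyck_decomp {x : List Bool} (h : isDyck x) (hne : x ≠ []) :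
    ∃ u v, isDyck u ∧ isDyck v ∧ x = (true :: u) ++ false :: v := by
  classical
  obtain ⟨z, rfl⟩ := dyck_head h hne
  have hex : ∃ m, 0 < m ∧ ((true :: z).take m).count true = ((true :: z).take m).count false :=
    ⟨(true :: z).length, by simp, by rw [List.take_length]; exact h.1⟩
  set m0 := Nat.find hex with hm0def
  obtain ⟨hm0pos, hm0bal⟩ := Nat.find_spec hex
  rw [← hm0def] at hm0pos hm0bal
  have hm0le : m0 ≤ (true :: z).length :=
    Nat.find_min' hex ⟨by simp, by rw [List.take_length]; exact h.1⟩
  have hm0two : 2 ≤ m0 := by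
    rcases Nat.lt_or_ge m0 2 with hlt | hge
    · exfalso
      have : m0 = 1 := by omega
      rw [this] at hm0bal
      simp [List.count_cons] at hm0bal
    · exact hge
  have hlt1 : m0 - 1 < (true :: z).length := by simp at hm0le ⊢; omega
  have htake : (true :: z).take m0 = (true :: z).take (m0-1) ++ [(true :: z)[m0-1]] := by
    conv_lhs => rw [show m0 = (m0-1)+1 from by omega]
    rw [List.take_succ, List.getElem?_eq_getElem hlt1]
    rfl
  have htk1 : (true :: z).take (m0-1) = true :: z.take (m0-2) := by
    rw [show m0-1 = (m0-2)+1 from by omega, List.take_succ_cons]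
  have hple := h.2 (m0 - 1)
  have hbit : (true :: z)[m0-1] = false ∧
      ((true :: z).take (m0-1)).count true = ((true :: z).take (m0-1)).count false + 1 := by
    have hc := hm0bal
    rw [htake, List.count_append, List.count_append] at hc
    cases hb : (true :: z)[m0-1]
    · rw [hb] at hc
      simp [List.count_cons] at hc
      exact ⟨rfl, by omega⟩
    · exfalso
      rw [hb] at hc
      simp [List.count_cons] at hc
      omega
  refine ⟨z.take (m0-2), (true :: z).drop m0, ⟨?_, ?_⟩, ⟨?_, ?_⟩, ?_⟩
  · -- u balanced
    have := hbit.2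
    rw [htk1] at this
    simp [List.count_cons] at this
    omega
  · -- u prefix
    intro j
    rw [List.take_take]
    have hile : j ⊓ (m0-2) ≤ m0 - 2 := inf_le_right
    set i := j ⊓ (m0-2) with hidef
    have hnotP : ¬(0 < i + 1 ∧
        ((true::z).take (i+1)).count true = ((true::z).take (i+1)).count false) :=
      Nat.find_min hex (by omega)
    have hle2 := h.2 (i+1)
    rw [List.take_succ_cons] at hnotP hle2
    simp [List.count_cons] at hnotP hle2
    omega
  · -- v balanced
    have hTd := count_take_drop true (true::z) m0
    have hFd := count_take_drop false (true::z) m0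
    have hb := h.1
    omega
  · -- v prefix
    intro j
    have hsplit : (true::z).take (m0 + j) = (true::z).take m0 ++ ((true::z).drop m0).take j :=
      List.take_add
    have hple2 := h.2 (m0 + j)
    rw [hsplit, List.count_append, List.count_append] at hple2
    omega
  · -- decomposition equality
    conv_lhs => rw [← List.take_append_drop m0 (true::z)]
    rw [htake, htk1, hbit.1]
    simp

-- CHUNK2
lemma getD_x_mid {u v : List Bool} {b c : Bool} :
    ((b :: u) ++ c :: v).getD (u.length + 1) false = c := by
  rw [List.getD_append_right _ _ _ _ (by simp)]
  simp

lemma getD_x_zero {u v : List Bool} {b c : Bool} :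
    ((b :: u) ++ c :: v).getD 0 false = b := by
  rw [List.getD_append _ _ _ _ (by simp)]
  rfl

lemma getD_x_left {u v : List Bool} {b c : Bool} {j : ℕ} (hj : j < u.length) :
    ((b :: u) ++ c :: v).getD (j+1) false = u.getD j false := by
  rw [List.getD_append _ _ _ _ (by simp; omega), List.getD_cons_succ]

lemma getD_x_right {u v : List Bool} {b c : Bool} {j : ℕ} :
    ((b :: u) ++ c :: v).getD (u.length + 2 + j) false = v.getD j false := by
  rw [List.getD_append_right _ _ _ _ (by simp; omega)]
  have h1 : u.length + 2 + j - (b :: u).length = j + 1 := by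
    simp only [List.length_cons]; omega
  rw [h1, List.getD_cons_succ]

structure GoodPi (π : List Bool → List ℕ) (x : List Bool) : Prop where
  len : (π x).length = x.length
  nodup : (π x).Nodup
  mem : ∀ a ∈ π x, 1 ≤ a ∧ a ≤ x.length
  alt : ∀ i, i < (π x).length →
    x.getD ((π x).getD i 0 - 1) false = decide (i % 2 = 1)

lemma getD_map_nat (f : ℕ → ℕ) (l : List ℕ) {i : ℕ} (hi : i < l.length) :
    (l.map f).getD i 0 = f (l.getD i 0) := by
  rw [List.getD_eq_getElem _ _ (by simpa using hi), List.getD_eq_getElem _ _ hi,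
    List.getElem_map]

lemma getD_mem {l : List ℕ} {i : ℕ} (hi : i < l.length) : l.getD i 0 ∈ l := by
  rw [List.getD_eq_getElem _ _ hi]
  exact List.getElem_mem _

lemma mirror_getD {u : List Bool} {j : ℕ} (hj : j < u.length) :
    (mirror u).getD j false = !(u.getD (u.length - 1 - j) false) := by
  rw [List.getD_eq_getElem _ _ (by rw [length_mirror]; exact hj),
    List.getD_eq_getElem _ _ (by omega)]
  exact getElem_mirror u j hj

lemma dyck_even {u : List Bool} (h : isDyck u) : u.length % 2 = 0 := by
  have h1 := h.1
  have h2 := count_tf u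
  omega

theorem goodPi_all {π : List Bool → List ℕ} (hπ : IsPiFun π) :
    ∀ (n : ℕ) (x : List Bool), x.length = n → isDyck x → GoodPi π x := by
  intro n
  induction n using Nat.strong_induction_on with
  | _ n ih =>
  intro x hlen hx
  rcases eq_or_ne x [] with rfl | hne
  · exact ⟨by simp [hπ.1], by simp [hπ.1], by simp [hπ.1], by simp [hπ.1]⟩
  obtain ⟨u, v, hu, hv, rfl⟩ := dyck_decomp hx hne
  have hn : n = u.length + v.length + 2 := by rw [← hlen]; simp; omega
  have Gd : GoodPi π (mirror u) :=
    ih (mirror u).length (by rw [length_mirror]; omega) _ rfl (isDyck_mirror hu)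
  have Gv : GoodPi π v := ih v.length (by omega) v rfl hv
  have hdlen : (π (mirror u)).length = u.length := by rw [Gd.len, length_mirror]
  have hvlen : (π v).length = v.length := Gv.len
  have hpieq := hπ.2 u v hu hv
  rw [show (true :: u ++ false :: v) = ((true :: u) ++ false :: v) from rfl] at hpieq
  set m := u.length with hmdef
  have hxlen : ((true :: u) ++ false :: v).length = m + v.length + 2 := by simp; omega
  have hmem : ∀ a ∈ π ((true :: u) ++ false :: v), 1 ≤ a ∧ a ≤ m + v.length + 2 := by
    intro a ha
    rw [hpieq] at ha
    simp only [List.mem_append, List.mem_cons, List.mem_map] at ha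
    rcases ha with (rfl | ⟨b, hb, rfl⟩) | (rfl | ⟨b, hb, rfl⟩)
    · omega
    · have := Gd.mem b hb; rw [length_mirror] at this; omega
    · omega
    · have := Gv.mem b hb; omega
  have hLlen : (π ((true :: u) ++ false :: v)).length = m + v.length + 2 := by
    rw [hpieq]; simp [hdlen, hvlen]; omega
  have hmeven : m % 2 = 0 := by
    have := dyck_even hu; omega
  refine ⟨by rw [hLlen, hxlen], ?_, by rw [hxlen]; exact hmem, ?_⟩
  · -- nodup
    rw [hpieq]
    rw [List.nodup_append]
    refine ⟨?_, ?_, ?_⟩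
    · rw [List.nodup_cons]
      constructor
      · intro hmem2
        simp only [List.mem_map] at hmem2
        obtain ⟨b, hb, hbe⟩ := hmem2
        have := Gd.mem b hb; rw [length_mirror] at this
        omega
      · refine List.Nodup.map_on ?_ Gd.nodup
        intro a ha b hb hab
        have h1 := Gd.mem a ha; have h2 := Gd.mem b hb
        rw [length_mirror] at h1 h2
        omega
    · rw [List.nodup_cons]
      constructor
      · intro hmem2
        simp only [List.mem_map] at hmem2
        obtain ⟨b, hb, hbe⟩ := hmem2
        omega
      · refine List.Nodup.map_on ?_ Gv.nodup
        intro a ha b hb hab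
        omega
    · intro a ha c hb hac
      subst hac
      simp only [List.mem_cons, List.mem_map] at ha hb
      rcases ha with rfl | ⟨b, hb2, rfl⟩
      · rcases hb with h1 | ⟨b, hb3, h1⟩
        · omega
        · have := Gv.mem b hb3; omega
      · have hbb := Gd.mem b hb2; rw [length_mirror] at hbb
        rcases hb with h1 | ⟨b', hb3, h1⟩
        · omega
        · have := Gv.mem b' hb3; omega
  · -- alt
    intro i hi
    rw [hLlen] at hi
    set A := (π (mirror u)).map (fun a => m + 2 - a) with hAdef
    set B := (π v).map (fun a => m + 2 + a) with hBdef
    have hA : A.length = m := by rw [hAdef, List.length_map, hdlen]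
    have hB : B.length = v.length := by rw [hBdef, List.length_map, hvlen]
    have hrw : π ((true :: u) ++ false :: v) = (m+2) :: (A ++ 1 :: B) := by
      rw [hpieq]; rfl
    rw [hrw]
    rcases Nat.eq_zero_or_pos i with rfl | hipos
    · rw [List.getD_cons_zero]
      have e : m + 2 - 1 = u.length + 1 := by omega
      rw [e, getD_x_mid]
      simp
    · rw [show i = (i-1)+1 from by omega, List.getD_cons_succ]
      rcases Nat.lt_or_ge (i-1) m with him | him
      · have hga : (A ++ 1 :: B).getD (i-1) 0 = A.getD (i-1) 0 :=
          List.getD_append _ _ _ _ (by omega)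
        rw [hga, hAdef, getD_map_nat _ _ (by rw [hdlen]; omega)]
        set b := (π (mirror u)).getD (i-1) 0 with hbdef
        have hbmem : b ∈ π (mirror u) := getD_mem (by rw [hdlen]; omega)
        have hbb := Gd.mem b hbmem
        rw [length_mirror] at hbb
        have halt := Gd.alt (i-1) (by rw [hdlen]; omega)
        rw [← hbdef, mirror_getD (by omega)] at halt
        rw [show u.length - 1 - (b - 1) = u.length - b from by omega] at halt
        have e1 : m + 2 - b - 1 = (u.length - b) + 1 := by omega
        rw [e1, getD_x_left (by omega)]
        rcases Nat.even_or_odd (i-1) with he | he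
        · have h1 : (i-1) % 2 = 0 := Nat.even_iff.mp he
          have h2 : ((i-1)+1) % 2 = 1 := by omega
          rw [h1] at halt
          rw [h2]
          simpa using halt
        · have h1 : (i-1) % 2 = 1 := Nat.odd_iff.mp he
          have h2 : ((i-1)+1) % 2 = 0 := by omega
          rw [h1] at halt
          rw [h2]
          simpa using halt
      · rcases Nat.eq_or_lt_of_le him with heq | hgt
        · have hga : (A ++ 1 :: B).getD (i-1) 0 = 1 := by
            rw [List.getD_append_right _ _ _ _ (by omega), show i - 1 - A.length = 0 from by omega,
              List.getD_cons_zero]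
          rw [hga, show (1:ℕ) - 1 = 0 from rfl, getD_x_zero]
          rw [show ((i-1)+1) % 2 = 1 from by omega]
          simp
        · have hga : (A ++ 1 :: B).getD (i-1) 0 = B.getD (i-1-m-1) 0 := by
            rw [List.getD_append_right _ _ _ _ (by omega),
              show i - 1 - A.length = (i-1-m-1)+1 from by omega, List.getD_cons_succ]
          rw [hga, hBdef, getD_map_nat _ _ (by rw [hvlen]; omega)]
          set b := (π v).getD (i-1-m-1) 0 with hbdef
          have hbmem : b ∈ π v := getD_mem (by rw [hvlen]; omega)
          have hbb := Gv.mem b hbmem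
          have halt := Gv.alt (i-1-m-1) (by rw [hvlen]; omega)
          rw [← hbdef] at halt
          have e1 : m + 2 + b - 1 = u.length + 2 + (b - 1) := by omega
          rw [e1, getD_x_right]
          rw [show b - 1 = b - 1 from rfl] at halt
          rw [halt]
          rw [show (i-1-m-1) % 2 = ((i-1)+1) % 2 from by omega]

-- CHUNK3 : flip machinery + scanl machinery
lemma length_flipBit (y : List Bool) (a : ℕ) : (flipBit y a).length = y.length := by
  simp [flipBit]

lemma length_foldl_flipBit : ∀ (l : List ℕ) (y : List Bool),
    (List.foldl flipBit y l).length = y.length := by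
  intro l
  induction l with
  | nil => intro y; rfl
  | cons a t ih => intro y; rw [List.foldl_cons, ih, length_flipBit]

lemma getD_flipBit_self {y : List Bool} {a : ℕ} (h1 : 1 ≤ a) (h2 : a ≤ y.length) :
    (flipBit y a).getD (a-1) false = !(y.getD (a-1) false) := by
  simp only [flipBit]
  rw [List.getD_eq_getElem _ _ (by simp only [List.length_set]; omega), List.getElem_set]
  simp

lemma getD_flipBit_other {y : List Bool} {a p : ℕ} (hne : p - 1 ≠ a - 1) :
    (flipBit y a).getD (p-1) false = y.getD (p-1) false := by
  rcases Nat.lt_or_ge (p-1) y.length with h | h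
  · simp only [flipBit]
    rw [List.getD_eq_getElem _ _ (by simp only [List.length_set]; omega), List.getElem_set,
      if_neg (Ne.symm hne), List.getD_eq_getElem _ _ h]
  · have h2 : y.length ≤ p - 1 := h
    have e1 : (flipBit y a).getD (p-1) false = false := by
      apply List.getD_eq_default
      simp only [flipBit, List.length_set]
      omega
    have e2 : y.getD (p-1) false = false := List.getD_eq_default _ _ h2
    rw [e1, e2]

lemma getD_foldl_flips : ∀ (l : List ℕ) (y : List Bool) (p : ℕ), l.Nodup →
    (∀ a ∈ l, 1 ≤ a ∧ a ≤ y.length) → 1 ≤ p → p ≤ y.length →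
    (List.foldl flipBit y l).getD (p-1) false =
      if p ∈ l then !(y.getD (p-1) false) else y.getD (p-1) false := by
  intro l
  induction l with
  | nil => intro y p _ _ _ _; simp
  | cons a t ih =>
    intro y p hnd hb hp1 hp2
    rw [List.foldl_cons]
    have hb' : ∀ q ∈ t, 1 ≤ q ∧ q ≤ (flipBit y a).length := by
      rw [length_flipBit]; exact fun q hq => hb q (List.mem_cons_of_mem _ hq)
    rcases eq_or_ne p a with rfl | hpa
    · have hnotin : p ∉ t := (List.nodup_cons.mp hnd).1
      rw [ih (flipBit y p) p (List.nodup_cons.mp hnd).2 hb' hp1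
        (by rw [length_flipBit]; exact hp2)]
      rw [if_neg hnotin, if_pos (List.mem_cons_self (a := p) (l := t)), getD_flipBit_self hp1 hp2]
    · have ha := hb a (List.mem_cons_self (a := a) (l := t))
      rw [ih (flipBit y a) p (List.nodup_cons.mp hnd).2 hb' hp1
        (by rw [length_flipBit]; exact hp2)]
      have he : (flipBit y a).getD (p-1) false = y.getD (p-1) false :=
        getD_flipBit_other (by omega)
      rw [he]
      by_cases hpt : p ∈ t
      · rw [if_pos hpt, if_pos (List.mem_cons_of_mem _ hpt)]
      · rw [if_neg hpt, if_neg (by simp [List.mem_cons, hpa, hpt])]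

lemma count_true_set {y : List Bool} {j : ℕ} (hj : j < y.length) (c : Bool) :
    (y.set j c).count true + (y.getD j false).toNat = y.count true + c.toNat := by
  rw [List.set_eq_take_append_cons_drop, if_pos hj]
  conv_rhs => rw [← List.take_append_drop j y, List.drop_eq_getElem_cons hj]
  rw [List.count_append, List.count_append, List.count_cons, List.count_cons,
    List.getD_eq_getElem _ _ hj]
  cases c <;> cases hy : y[j] <;> simp [hy] <;> omega

lemma count_true_flipBit {y : List Bool} {a : ℕ} (h1 : 1 ≤ a) (h2 : a ≤ y.length) :
    (flipBit y a).count true + (y.getD (a-1) false).toNat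
      = y.count true + (!(y.getD (a-1) false)).toNat := by
  have := count_true_set (y := y) (j := a-1) (by omega) (!(y.getD (a-1) false))
  simpa [flipBit] using this

lemma ext_getD {y z : List Bool} (hlen : y.length = z.length)
    (h : ∀ p, 1 ≤ p → p ≤ y.length → y.getD (p-1) false = z.getD (p-1) false) : y = z := by
  apply List.ext_getElem hlen
  intro n h1 h2
  have := h (n+1) (by omega) (by omega)
  simp only [Nat.add_sub_cancel] at this
  rw [List.getD_eq_getElem _ _ h1, List.getD_eq_getElem _ _ h2] at this
  exact this

lemma foldl_flips_complete {x : List Bool} {l : List ℕ} (hnd : l.Nodup)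
    (hmem : ∀ a ∈ l, 1 ≤ a ∧ a ≤ x.length) (hlen : l.length = x.length) :
    List.foldl flipBit x l = compl x := by
  have hall : ∀ p, 1 ≤ p → p ≤ x.length → p ∈ l := by
    intro p hp1 hp2
    have hsub : l.toFinset ⊆ Finset.Icc 1 x.length := by
      intro a ha
      rw [List.mem_toFinset] at ha
      have := hmem a ha
      rw [Finset.mem_Icc]
      omega
    have hcard : (Finset.Icc 1 x.length).card ≤ l.toFinset.card := by
      rw [List.toFinset_card_of_nodup hnd, Nat.card_Icc]
      omega
    have heq : l.toFinset = Finset.Icc 1 x.length :=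
      Finset.eq_of_subset_of_card_le hsub hcard
    rw [← List.mem_toFinset, heq, Finset.mem_Icc]
    omega
  apply ext_getD
  · rw [length_foldl_flipBit, length_compl]
  · intro p hp1 hp2
    rw [length_foldl_flipBit] at hp2
    rw [getD_foldl_flips l x p hnd hmem hp1 hp2, if_pos (hall p hp1 hp2)]
    rw [List.getD_eq_getElem _ _ (by omega), List.getD_eq_getElem _ _ (by rw [length_compl]; omega)]
    simp [compl_def, List.getElem_map]

lemma scanl_eq_map_range {α β : Type} (f : α → β → α) :
    ∀ (l : List β) (a : α),
      List.scanl f a l = (List.range (l.length + 1)).map (fun i => List.foldl f a (l.take i)) := by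
  intro l
  induction l with
  | nil => intro a; simp
  | cons b t ih =>
    intro a
    rw [List.scanl_cons, ih (f a b)]
    have hrng : (List.range ((b :: t).length + 1)).map
        (fun i => List.foldl f a (List.take i (b :: t)))
        = a :: (List.range (t.length + 1)).map (fun i => List.foldl f (f a b) (List.take i t)) := by
      rw [show (b::t).length + 1 = (t.length + 1) + 1 from by simp, List.range_succ_eq_map,
        List.map_cons, List.map_map]
      simp only [Function.comp_def, Nat.succ_eq_add_one, List.take_succ_cons, List.foldl_cons,
        List.take_zero, List.foldl_nil]
    rw [hrng]

lemma scanl_head {α β : Type} (f : α → β → α) (l : List β) (a : α) (h : List.scanl f a l ≠ []) :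
    (List.scanl f a l).head h = a := by
  cases l <;> simp [List.scanl_cons, List.scanl_nil]

lemma self_mem_scanl {α β : Type} (f : α → β → α) (l : List β) (a : α) :
    a ∈ List.scanl f a l := by
  cases l <;> simp [List.scanl_cons, List.scanl_nil]

lemma foldl_mem_scanl {α β : Type} (f : α → β → α) :
    ∀ (l : List β) (a : α), List.foldl f a l ∈ List.scanl f a l := by
  intro l
  induction l with
  | nil => intro a; simp [List.scanl_nil]
  | cons b t ih =>
    intro a
    rw [List.scanl_cons, List.foldl_cons]
    simp only [List.singleton_append, List.mem_cons]
    exact Or.inr (ih (f a b))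

lemma length_mem_scanl : ∀ (l : List ℕ) (a : List Bool) (y : List Bool),
    y ∈ List.scanl flipBit a l → y.length = a.length := by
  intro l
  induction l with
  | nil => intro a y hy; simp [List.scanl_nil] at hy; rw [hy]
  | cons b t ih =>
    intro a y hy
    rw [List.scanl_cons] at hy
    simp only [List.singleton_append, List.mem_cons] at hy
    rcases hy with rfl | hy
    · rfl
    · rw [ih _ _ hy, length_flipBit]

lemma mem_scanl_append {α β : Type} (f : α → β → α) :
    ∀ (l₁ : List β) (l₂ : List β) (a : α) (y : α),
    (y ∈ List.scanl f a (l₁ ++ l₂) ↔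
      y ∈ List.scanl f a l₁ ∨ y ∈ List.scanl f (List.foldl f a l₁) l₂) := by
  intro l₁
  induction l₁ with
  | nil =>
    intro l₂ a y
    simp only [List.nil_append, List.scanl_nil, List.foldl_nil, List.mem_singleton]
    constructor
    · intro h; exact Or.inr h
    · rintro (rfl | h)
      · exact self_mem_scanl f l₂ y
      · exact h
  | cons b t ih =>
    intro l₂ a y
    rw [List.cons_append, List.scanl_cons, List.scanl_cons, List.foldl_cons]
    simp only [List.singleton_append, List.mem_cons]
    rw [ih]
    tauto

lemma scanl_flips_map (e : List Bool → List Bool) (g : ℕ → ℕ) (m : ℕ)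
    (he : ∀ z a, z.length = m → 1 ≤ a → a ≤ m → flipBit (e z) (g a) = e (flipBit z a)) :
    ∀ (l : List ℕ) (z : List Bool), z.length = m → (∀ a ∈ l, 1 ≤ a ∧ a ≤ m) →
      List.scanl flipBit (e z) (l.map g) = (List.scanl flipBit z l).map e := by
  intro l
  induction l with
  | nil => intro z _ _; simp [List.scanl_nil]
  | cons a t ih =>
    intro z hz hb
    have ha := hb a (List.mem_cons_self (a := a) (l := t))
    rw [List.map_cons, List.scanl_cons, List.scanl_cons]
    rw [he z a hz ha.1 ha.2]
    rw [ih (flipBit z a) (by rw [length_flipBit]; exact hz)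
      (fun q hq => hb q (List.mem_cons_of_mem _ hq))]
    simp

lemma foldl_flips_map (e : List Bool → List Bool) (g : ℕ → ℕ) (m : ℕ)
    (he : ∀ z a, z.length = m → 1 ≤ a → a ≤ m → flipBit (e z) (g a) = e (flipBit z a)) :
    ∀ (l : List ℕ) (z : List Bool), z.length = m → (∀ a ∈ l, 1 ≤ a ∧ a ≤ m) →
      List.foldl flipBit (e z) (l.map g) = e (List.foldl flipBit z l) := by
  intro l
  induction l with
  | nil => intro z _ _; simp
  | cons a t ih =>
    intro z hz hb
    have ha := hb a (List.mem_cons_self (a := a) (l := t))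
    rw [List.map_cons, List.foldl_cons, List.foldl_cons, he z a hz ha.1 ha.2]
    exact ih (flipBit z a) (by rw [length_flipBit]; exact hz)
      (fun q hq => hb q (List.mem_cons_of_mem _ hq))

lemma flipBit_append_left {s t : List Bool} {a : ℕ} (h1 : 1 ≤ a) (h2 : a ≤ s.length) :
    flipBit (s ++ t) a = flipBit s a ++ t := by
  simp only [flipBit]
  have hg : (s ++ t).getD (a-1) false = s.getD (a-1) false :=
    List.getD_append _ _ _ _ (by omega)
  rw [hg, List.set_append, if_pos (by omega)]

lemma flipBit_append_right {s t : List Bool} {a : ℕ} (h1 : s.length + 1 ≤ a) :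
    flipBit (s ++ t) a = s ++ flipBit t (a - s.length) := by
  simp only [flipBit]
  have hg : (s ++ t).getD (a-1) false = t.getD (a - s.length - 1) false := by
    rw [List.getD_append_right _ _ _ _ (by omega)]
    congr 1
    omega
  rw [hg, List.set_append, if_neg (by omega),
    show a - 1 - s.length = a - s.length - 1 from by omega]

lemma flipBit_cons {b : Bool} {l : List Bool} {a : ℕ} (h : 2 ≤ a) :
    flipBit (b :: l) a = b :: flipBit l (a-1) := by
  have := flipBit_append_right (s := [b]) (t := l) (a := a) (by simp; omega)
  simpa using this

lemma flipBit_one {b : Bool} {l : List Bool} : flipBit (b :: l) 1 = (!b) :: l := by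
  simp [flipBit]

lemma flipBit_mirror {z : List Bool} {a : ℕ} (h1 : 1 ≤ a) (h2 : a ≤ z.length) :
    flipBit (mirror z) (z.length + 1 - a) = mirror (flipBit z a) := by
  have hj : a - 1 < z.length := by omega
  have hset : mirror (z.set (a-1) (!(z.getD (a-1) false)))
      = (mirror z).set (z.length - 1 - (a-1)) (!(!(z.getD (a-1) false))) := by
    apply List.ext_getElem
    · simp [length_mirror]
    · intro i hh1 hh2
      have hilt : i < z.length := by
        rw [length_mirror, List.length_set] at hh1
        exact hh1
      rw [List.getElem_set]
      have hms : (mirror (z.set (a-1) (!(z.getD (a-1) false))))[i]'(hh1)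
          = !((z.set (a-1) (!(z.getD (a-1) false)))[z.length - 1 - i]'(by
              rw [List.length_set]; omega)) := by
        have := getElem_mirror (z.set (a-1) (!(z.getD (a-1) false))) i
          (by rw [List.length_set]; exact hilt)
        simpa [List.length_set] using this
      rw [hms, List.getElem_set]
      by_cases hia : z.length - 1 - (a-1) = i
      · rw [if_pos hia, if_pos (by omega)]
      · rw [if_neg (by omega), if_neg hia]
        have := getElem_mirror z i hilt
        rw [this]
  have e2 : (mirror z).getD (z.length - 1 - (a-1)) false = !(z.getD (a-1) false) := by
    have h3 := mirror_getD (u := z) (j := z.length - 1 - (a-1)) (by omega)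
    rw [show z.length - 1 - (z.length - 1 - (a-1)) = a - 1 from by omega] at h3
    exact h3
  simp only [flipBit]
  rw [hset]
  have e1 : z.length + 1 - a - 1 = z.length - 1 - (a - 1) := by omega
  rw [e1, e2, Bool.not_not]

-- CHUNK4: path decomposition
lemma flip_mid {u v : List Bool} :
    flipBit ((true :: u) ++ false :: v) (u.length + 2) = (true :: u) ++ true :: v := by
  rw [flipBit_append_right (by simp only [List.length_cons]; omega)]
  have e : u.length + 2 - (true :: u).length = 1 := by simp only [List.length_cons]; omega
  rw [e, flipBit_one]
  simp

lemma flip_e1 {v : List Bool} (m : ℕ) {z : List Bool} (hz : z.length = m) {a : ℕ}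
    (h1 : 1 ≤ a) (h2 : a ≤ m) :
    flipBit ((true :: mirror z) ++ true :: v) (m + 2 - a)
      = (true :: mirror (flipBit z a)) ++ true :: v := by
  rw [show (true :: mirror z) ++ true :: v = true :: (mirror z ++ true :: v) from by simp,
    flipBit_cons (by omega), flipBit_append_left (by omega) (by rw [length_mirror]; omega)]
  rw [show m + 2 - a - 1 = z.length + 1 - a from by omega, flipBit_mirror h1 (by omega)]
  simp

lemma flip_e2 {u v : List Bool} (m : ℕ) (hm : u.length = m) {w : List Bool}
    (hw : w.length = v.length) {a : ℕ} (h1 : 1 ≤ a) (h2 : a ≤ v.length) :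
    flipBit ((false :: compl u) ++ true :: w) (m + 2 + a)
      = (false :: compl u) ++ true :: flipBit w a := by
  rw [show (false :: compl u) ++ true :: w = false :: (compl u ++ true :: w) from by simp,
    flipBit_cons (by omega),
    flipBit_append_right (by rw [length_compl]; omega)]
  have e : m + 2 + a - 1 - (compl u).length = a + 1 := by rw [length_compl]; omega
  rw [e, flipBit_cons (by omega)]
  simp

lemma pathOf_nil {π : List Bool → List ℕ} (hπ : IsPiFun π) : pathOf π [] = [[]] := by
  rw [pathOf, hπ.1, List.scanl_nil]

lemma self_mem_pathOf {π : List Bool → List ℕ} (x : List Bool) : x ∈ pathOf π x :=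
  self_mem_scanl _ _ _

lemma length_mem_pathOf {π : List Bool → List ℕ} {x y : List Bool} (h : y ∈ pathOf π x) :
    y.length = x.length := length_mem_scanl _ _ _ h

lemma mem_pathOf_decomp {π : List Bool → List ℕ} (hπ : IsPiFun π) {u v y : List Bool}
    (hu : isDyck u) (hv : isDyck v) :
    y ∈ pathOf π ((true :: u) ++ false :: v) ↔
      (y = (true :: u) ++ false :: v
       ∨ (∃ z ∈ pathOf π (mirror u), y = (true :: mirror z) ++ true :: v)
       ∨ (∃ w ∈ pathOf π v, y = (false :: compl u) ++ true :: w)) := by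
  have Gd : GoodPi π (mirror u) := goodPi_all hπ _ _ rfl (isDyck_mirror hu)
  have Gv : GoodPi π v := goodPi_all hπ _ _ rfl hv
  have hdlen : (π (mirror u)).length = u.length := by rw [Gd.len, length_mirror]
  have hdmem : ∀ a ∈ π (mirror u), 1 ≤ a ∧ a ≤ u.length := by
    intro a ha
    have := Gd.mem a ha
    rw [length_mirror] at this
    exact this
  have hpieq := hπ.2 u v hu hv
  rw [show (true :: u ++ false :: v) = ((true :: u) ++ false :: v) from rfl] at hpieq
  rw [pathOf, hpieq]
  rw [show ((u.length + 2) :: (π (mirror u)).map (fun a => u.length + 2 - a))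
        ++ 1 :: (π v).map (fun a => u.length + 2 + a)
      = (u.length + 2) :: ((π (mirror u)).map (fun a => u.length + 2 - a)
        ++ 1 :: (π v).map (fun a => u.length + 2 + a)) from by simp]
  rw [List.scanl_cons, flip_mid]
  -- first block embedding
  have he1 : List.scanl flipBit ((true :: u) ++ true :: v)
      ((π (mirror u)).map (fun a => u.length + 2 - a))
      = (pathOf π (mirror u)).map (fun z => (true :: mirror z) ++ true :: v) := by
    have := scanl_flips_map (fun z => (true :: mirror z) ++ true :: v)
      (fun a => u.length + 2 - a) u.length
      (fun z a hz ha1 ha2 => flip_e1 u.length hz ha1 ha2)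
      (π (mirror u)) (mirror u) (length_mirror u) hdmem
    simp only [mirror_mirror] at this
    exact this
  have hfold : List.foldl flipBit ((true :: u) ++ true :: v)
      ((π (mirror u)).map (fun a => u.length + 2 - a))
      = true :: (compl u ++ true :: v) := by
    have := foldl_flips_map (fun z => (true :: mirror z) ++ true :: v)
      (fun a => u.length + 2 - a) u.length
      (fun z a hz ha1 ha2 => flip_e1 u.length hz ha1 ha2)
      (π (mirror u)) (mirror u) (length_mirror u) hdmem
    simp only [mirror_mirror] at this
    rw [this, foldl_flips_complete Gd.nodup
      (by rw [length_mirror]; exact hdmem) (by rw [length_mirror]; exact hdlen),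
      mirror_compl, reverse_mirror]
    rfl
  have he2 : List.scanl flipBit ((false :: compl u) ++ true :: v)
      ((π v).map (fun a => u.length + 2 + a))
      = (pathOf π v).map (fun w => (false :: compl u) ++ true :: w) := by
    exact scanl_flips_map (fun w => (false :: compl u) ++ true :: w)
      (fun a => u.length + 2 + a) v.length
      (fun w a hw' ha1 ha2 => flip_e2 u.length rfl hw' ha1 ha2)
      (π v) v rfl Gv.mem
  rw [List.mem_cons, mem_scanl_append, he1, hfold, List.scanl_cons, flipBit_one]
  rw [show (!true) = false from rfl]
  rw [show false :: (compl u ++ true :: v) = (false :: compl u) ++ true :: v from rfl, he2]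
  rw [List.mem_cons]
  constructor
  · rintro (h | (h | (h | h)))
    · exact Or.inl h
    · refine Or.inr (Or.inl ?_)
      rw [List.mem_map] at h
      obtain ⟨z, hz, rfl⟩ := h
      exact ⟨z, hz, rfl⟩
    · refine Or.inr (Or.inl ?_)
      refine ⟨compl (mirror u), ?_, ?_⟩
      · rw [← foldl_flips_complete Gd.nodup (by rw [length_mirror]; exact hdmem)
          (by rw [length_mirror]; exact hdlen)]
        exact foldl_mem_scanl _ _ _
      · rw [h, mirror_compl, reverse_mirror]
        rfl
    · refine Or.inr (Or.inr ?_)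
      rw [List.mem_map] at h
      obtain ⟨w, hw, rfl⟩ := h
      exact ⟨w, hw, rfl⟩
  · rintro (h | (⟨z, hz, rfl⟩ | ⟨w, hw, rfl⟩))
    · exact Or.inl h
    · exact Or.inr (Or.inl (List.mem_map_of_mem hz))
    · exact Or.inr (Or.inr (Or.inr (List.mem_map_of_mem hw)))



-- CHUNK5: splits
lemma no_split_dyck {y w v : List Bool} (hy : isDyck y) (hv : isDyck v)
    (heq : y = (true :: w) ++ true :: v) : False := by
  have hpre := hy.2 (w.length + 1)
  rw [heq] at hpre
  rw [List.take_append,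
    List.take_of_length_le (by simp only [List.length_cons]; omega),
    show w.length + 1 - (true :: w).length = 0 from by simp only [List.length_cons]; omega,
    List.take_zero, List.append_nil] at hpre
  have hb := hy.1
  rw [heq] at hb
  simp only [List.count_append, List.count_cons] at hpre hb
  have hvb := hv.1
  simp at hpre hb
  omega

lemma splitA_aux {c c' w w' : List Bool} (hc : antiDyck c) (hc' : antiDyck c')
    (h : c ++ true :: w = c' ++ true :: w') (hlen : c.length ≤ c'.length) : c = c' := by
  rcases eq_or_lt_of_le hlen with heq | hlt
  · exact (List.append_inj h heq).1
  · exfalso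
    have htake := congrArg (List.take (c.length + 1)) h
    rw [List.take_append, List.take_append,
      List.take_of_length_le (by omega),
      show c.length + 1 - c.length = 1 from by omega,
      show c.length + 1 - c'.length = 0 from by omega,
      List.take_zero, List.append_nil] at htake
    have h2 := hc'.2 (c.length + 1)
    rw [← htake] at h2
    simp only [List.count_append, List.take_succ_cons, List.take_zero, List.count_cons,
      List.count_nil] at h2
    have hb := hc.1
    simp at h2
    omega

lemma splitA_unique {c c' w w' : List Bool} (hc : antiDyck c) (hc' : antiDyck c')
    (h : c ++ true :: w = c' ++ true :: w') : c = c' ∧ w = w' := by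
  have hcc : c = c' := by
    rcases Nat.le_total c.length c'.length with hl | hl
    · exact splitA_aux hc hc' h hl
    · exact (splitA_aux hc' hc h.symm hl).symm
  subst hcc
  have h2 := List.append_cancel_left h
  exact ⟨rfl, by injection h2⟩

lemma splitB_aux {w w' v v' : List Bool} (hv : isDyck v) (hv' : isDyck v')
    (h : w ++ true :: v = w' ++ true :: v') (hlen : v.length ≤ v'.length) : v = v' := by
  rcases eq_or_lt_of_le hlen with heq | hlt
  · have hwlen : w.length = w'.length := by
      have := congrArg List.length h
      simp only [List.length_append, List.length_cons] at this
      omega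
    have h2 := (List.append_inj h hwlen).2
    injection h2
  · exfalso
    have hwgt : w'.length + 1 ≤ w.length := by
      have hh := congrArg List.length h
      simp only [List.length_append, List.length_cons] at hh
      omega
    set t := w.drop (w'.length + 1) with htdef
    have hdrop : t ++ true :: v = v' := by
      have h1 := congrArg (List.drop (w'.length + 1)) h
      rw [List.drop_append, List.drop_append,
        show w'.length + 1 - w.length = 0 from by omega, List.drop_zero,
        List.drop_eq_nil_of_le (show w'.length ≤ w'.length + 1 from by omega), List.nil_append,
        show w'.length + 1 - w'.length = 1 from by omega] at h1
      simp only [List.drop_one, List.tail_cons] at h1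
      rw [htdef]
      exact h1
    have hpre := hv'.2 t.length
    rw [← hdrop, List.take_append, List.take_of_length_le (le_refl _),
      Nat.sub_self, List.take_zero, List.append_nil] at hpre
    have hbv' := hv'.1
    rw [← hdrop] at hbv'
    simp only [List.count_append, List.count_cons] at hbv'
    have hbv := hv.1
    simp at hbv'
    omega

lemma splitB_unique {w w' v v' : List Bool} (hv : isDyck v) (hv' : isDyck v')
    (h : w ++ true :: v = w' ++ true :: v') : w = w' ∧ v = v' := by
  have hvv : v = v' := by
    rcases Nat.le_total v.length v'.length with hl | hl
    · exact splitB_aux hv hv' h hl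
    · exact (splitB_aux hv' hv h.symm hl).symm
  subst hvv
  have hwlen : w.length = w'.length := by
    have := congrArg List.length h
    simp only [List.length_append, List.length_cons] at this
    omega
  exact ⟨(List.append_inj h hwlen).1, rfl⟩

-- CHUNK6: cover
def myB (y : List Bool) : Prop :=
  2 * y.count true = y.length ∨ 2 * y.count true = y.length + 2

theorem cover {π : List Bool → List ℕ} (hπ : IsPiFun π) :
    ∀ (n : ℕ) (y : List Bool), y.length = n → myB y →
      ∃! x, isDyck x ∧ y ∈ pathOf π x := by
  intro n
  induction n using Nat.strong_induction_on with
  | _ n ih =>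
  intro y hlen hw
  rcases Nat.eq_zero_or_pos n with rfl | hnpos
  · have hy : y = [] := List.length_eq_zero_iff.mp hlen
    subst hy
    refine ⟨[], ⟨isDyck_nil, by rw [pathOf_nil hπ]; exact List.mem_singleton_self _⟩, ?_⟩
    rintro x' ⟨_, hx'⟩
    have h0 := length_mem_pathOf hx'
    simp only [List.length_nil] at h0
    exact List.length_eq_zero_iff.mp h0.symm
  cases y with
  | nil => simp at hlen; omega
  | cons b z =>
  simp only [List.length_cons] at hlen
  have hcz := count_tf z
  cases b
  · -- y = false :: z
    have hwz : 2 * z.count true = n ∨ 2 * z.count true = n + 2 := by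
      have hw' : 2 * z.count true = z.length + 1 ∨ 2 * z.count true = z.length + 1 + 2 := by
        simpa [myB, List.count_cons] using hw
      omega
    have hPex : ∃ j, (z.take j).count false < (z.take j).count true :=
      ⟨z.length, by rw [List.take_length]; omega⟩
    set t := Nat.find hPex with htdef
    have hPt := Nat.find_spec hPex
    rw [← htdef] at hPt
    have htpos : 1 ≤ t := by
      rcases Nat.eq_zero_or_pos t with h0 | h1
      · rw [h0] at hPt; simp at hPt
      · exact h1
    have htle : t ≤ z.length := by
      apply Nat.find_min'
      show (z.take z.length).count false < (z.take z.length).count true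
      rw [List.take_length]
      omega
    have htlt : t - 1 < z.length := by omega
    have htake : z.take t = z.take (t-1) ++ [z[t-1]] := by
      conv_lhs => rw [show t = (t-1)+1 from by omega]
      rw [List.take_succ, List.getElem?_eq_getElem htlt]
      rfl
    have hmin : ¬ ((z.take (t-1)).count false < (z.take (t-1)).count true) :=
      Nat.find_min hPex (by omega)
    have hbit : z[t-1] = true ∧
        (z.take (t-1)).count true = (z.take (t-1)).count false := by
      rw [htake, List.count_append, List.count_append] at hPt
      cases hb : z[t-1]
      · exfalso; rw [hb] at hPt; simp at hPt; omega
      · rw [hb] at hPt; simp at hPt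
        exact ⟨rfl, by omega⟩
    set c := z.take (t-1) with hcdef
    set w := z.drop t with hwdef
    have hzsplit : z = c ++ true :: w := by
      conv_lhs => rw [← List.take_append_drop (t-1) z]
      have hd : z.drop (t-1) = true :: w := by
        rw [List.drop_eq_getElem_cons htlt, hbit.1, show t - 1 + 1 = t from by omega, ← hwdef]
      rw [hd]
    have hcanti : antiDyck c := by
      refine ⟨hbit.2, fun j => ?_⟩
      rw [hcdef, List.take_take]
      have := Nat.find_min hPex (m := j ⊓ (t-1)) (by omega)
      omega
    have hctw := count_take_drop true z t
    have hcfw := count_take_drop false z t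
    rw [← hwdef] at hctw hcfw
    have hctt : (z.take t).count true = c.count true + 1 := by
      rw [htake, List.count_append, hbit.1]; simp
    have hctf : (z.take t).count false = c.count false := by
      rw [htake, List.count_append, hbit.1]; simp
    have hlc := count_tf c
    have hlcz : c.length = t - 1 := by rw [hcdef, List.length_take]; omega
    have hlw : w.length = z.length - t := by rw [hwdef, List.length_drop]
    have hwB : myB w := by
      have hwtf := count_tf w
      simp only [myB]
      omega
    obtain ⟨v, ⟨hvD, hvm⟩, hvu⟩ := ih w.length (by omega) w rfl hwB
    refine ⟨(true :: compl c) ++ false :: v, ⟨isDyck_compose (isDyck_compl hcanti) hvD, ?_⟩, ?_⟩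
    · rw [mem_pathOf_decomp hπ (isDyck_compl hcanti) hvD]
      refine Or.inr (Or.inr ⟨w, hvm, ?_⟩)
      rw [compl_compl, hzsplit]
      rfl
    · rintro x' ⟨hx'D, hx'm⟩
      have hx'len : x'.length = n := by
        have := length_mem_pathOf hx'm
        simp only [List.length_cons] at this
        omega
      have hx'ne : x' ≠ [] := by
        intro h0; rw [h0] at hx'len; simp at hx'len; omega
      obtain ⟨u', v', hu', hv', rfl⟩ := dyck_decomp hx'D hx'ne
      rw [mem_pathOf_decomp hπ hu' hv'] at hx'm
      rcases hx'm with h | h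
      · exfalso; simp at h
      rcases h with ⟨s, hs, h⟩ | ⟨w'', hw'', h⟩
      · exfalso; simp at h
      · have hz2 : z = compl u' ++ true :: w'' := by
          rw [show (false :: compl u') ++ true :: w'' = false :: (compl u' ++ true :: w'')
            from rfl] at h
          injection h
        have hsplit := splitA_unique (antiDyck_compl hu') hcanti (hz2.symm.trans hzsplit)
        have hu'c : u' = compl c := by rw [← hsplit.1, compl_compl]
        have hveq : v' = v := hvu v' ⟨hv', by rw [← hsplit.2]; exact hw''⟩
        rw [hu'c, hveq]
  · -- y = true :: z
    by_cases hyd : isDyck (true :: z)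
    · refine ⟨true :: z, ⟨hyd, self_mem_pathOf _⟩, ?_⟩
      rintro x' ⟨hx'D, hx'm⟩
      have hx'len : x'.length = n := by
        have := length_mem_pathOf hx'm
        simp only [List.length_cons] at this
        omega
      have hx'ne : x' ≠ [] := by
        intro h0; rw [h0] at hx'len; simp at hx'len; omega
      obtain ⟨u', v', hu', hv', rfl⟩ := dyck_decomp hx'D hx'ne
      rw [mem_pathOf_decomp hπ hu' hv'] at hx'm
      rcases hx'm with h | h
      · exact h.symm
      rcases h with ⟨s, hs, h⟩ | ⟨w'', hw'', h⟩
      · exact (no_split_dyck hyd hv' h).elim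
      · exfalso; simp at h
    · -- not Dyck
      set Y := true :: z with hYdef
      have hYlen : Y.length = n := by rw [hYdef]; simp only [List.length_cons]; omega
      have hYw : 2 * Y.count true = n ∨ 2 * Y.count true = n + 2 := by
        have := hw
        simp only [myB] at this
        rwa [hYlen] at this
      have hYtf := count_tf Y
      have hneven : n % 2 = 0 := by omega
      have hDex : ∃ jj, jj ≤ n ∧ 2 * (Y.take jj).count true + n < 2 * Y.count true + jj := by
        rcases hYw with h2 | h2
        · have hbal : Y.count true = Y.count false := by omega
          have hpre : ∃ j, (Y.take j).count true < (Y.take j).count false := by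
            by_contra hall
            push_neg at hall
            exact hyd ⟨hbal, hall⟩
          obtain ⟨j, hj⟩ := hpre
          rcases le_total j n with hjle | hjle
          · refine ⟨j, hjle, ?_⟩
            have h4 := count_tf (Y.take j)
            have h5 : (Y.take j).length = j := by rw [List.length_take]; omega
            omega
          · exfalso
            rw [List.take_of_length_le (by omega)] at hj
            omega
        · exact ⟨0, Nat.zero_le n, by simp; omega⟩
      obtain ⟨jw, hjwn, hjwD⟩ := hDex
      set j0 := Nat.findGreatest (fun jj => 2 * (Y.take jj).count true + n < 2 * Y.count true + jj) n
        with hj0def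
      have hj0D : 2 * (Y.take j0).count true + n < 2 * Y.count true + j0 := by
        have := Nat.findGreatest_spec (P := fun jj => 2 * (Y.take jj).count true + n < 2 * Y.count true + jj) hjwn hjwD
        rwa [← hj0def] at this
      have hj0le : j0 ≤ n := by
        have := Nat.findGreatest_le (P := fun jj => 2 * (Y.take jj).count true + n < 2 * Y.count true + jj) n
        omega
      have hmax : ∀ l, j0 < l → l ≤ n →
          ¬ (2 * (Y.take l).count true + n < 2 * Y.count true + l) := by
        intro l h1 h2
        have h3 : Nat.findGreatest
            (fun jj => 2 * (Y.take jj).count true + n < 2 * Y.count true + jj) n < l := by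
          rw [hj0def] at h1
          exact h1
        exact Nat.findGreatest_is_greatest
          (P := fun jj => 2 * (Y.take jj).count true + n < 2 * Y.count true + jj) h3 h2
      have hj0lt : j0 < n := by
        rcases eq_or_lt_of_le hj0le with h | h
        · exfalso
          have hfull : Y.take j0 = Y := by
            rw [h, ← hYlen, List.take_length]
          rw [hfull] at hj0D
          omega
        · exact h
      have hnD : ¬ (2 * (Y.take (j0+1)).count true + n < 2 * Y.count true + (j0+1)) :=
        hmax (j0+1) (by omega) (by omega)
      have hj0lt2 : j0 < Y.length := by omega
      have htkj : Y.take (j0+1) = Y.take j0 ++ [Y[j0]] := by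
        rw [List.take_succ, List.getElem?_eq_getElem hj0lt2]
        rfl
      have hcc := count_tf (Y.take j0)
      have hlc0 : (Y.take j0).length = j0 := by rw [List.length_take]; omega
      have hbitT : Y[j0] = true ∧
          2 * (Y.take (j0+1)).count true + n = 2 * Y.count true + (j0+1) := by
        cases hb : Y[j0]
        · exfalso
          rw [htkj, List.count_append, hb] at hnD
          simp at hnD
          omega
        · refine ⟨rfl, ?_⟩
          rw [htkj, List.count_append, hb] at hnD ⊢
          simp at hnD ⊢
          omega
      have hcntj := hbitT.2
      have hcc1 := count_tf (Y.take (j0+1))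
      have hlc1 : (Y.take (j0+1)).length = j0+1 := by rw [List.length_take]; omega
      have hjeven : (j0+1) % 2 = 0 := by omega
      have hj2 : 2 ≤ j0 + 1 := by omega
      -- suffix v is Dyck
      have hvsuffD : isDyck (Y.drop (j0+1)) := by
        constructor
        · have h1 := count_take_drop true Y (j0+1)
          have h2 := count_take_drop false Y (j0+1)
          have h4 := count_tf (Y.drop (j0+1))
          have h5 : (Y.drop (j0+1)).length = n - (j0+1) := by rw [List.length_drop]; omega
          omega
        · intro i
          have hdt : (Y.drop (j0+1)).take i = (Y.drop (j0+1)).take (i ⊓ (n - (j0+1))) := by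
            rcases le_total i (n - (j0+1)) with h | h
            · rw [inf_of_le_left h]
            · rw [inf_of_le_right h, List.take_of_length_le (by rw [List.length_drop]; omega),
                List.take_of_length_le (by rw [List.length_drop]; omega)]
          rw [hdt]
          set i' := i ⊓ (n - (j0+1)) with hi'def
          have hsplit2 : Y.take ((j0+1) + i') = Y.take (j0+1) ++ (Y.drop (j0+1)).take i' :=
            List.take_add
          have hnD2 : ¬ (2 * (Y.take ((j0+1) + i')).count true + n
              < 2 * Y.count true + ((j0+1) + i')) := by
            rcases Nat.eq_zero_or_pos i' with h0 | h0
            · rw [h0, Nat.add_zero]; exact hnD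
            · exact hmax ((j0+1) + i') (by omega) (by omega)
          rw [hsplit2, List.count_append] at hnD2
          have h4 := count_tf ((Y.drop (j0+1)).take i')
          have h5 : ((Y.drop (j0+1)).take i').length = i' := by
            rw [List.length_take, List.length_drop]; omega
          omega
      have htk0 : Y.take j0 = true :: z.take (j0-1) := by
        conv_lhs => rw [hYdef, show j0 = (j0-1)+1 from by omega, List.take_succ_cons]
      have hYsplit : Y = (true :: z.take (j0-1)) ++ true :: (Y.drop (j0+1)) := by
        conv_lhs => rw [← List.take_append_drop (j0+1) Y]
        rw [htkj, hbitT.1, htk0]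
        simp
      -- counts for mirror w'
      have hcw' := count_tf (z.take (j0-1))
      have hctk0T : (Y.take j0).count true = (z.take (j0-1)).count true + 1 := by
        rw [htk0]; simp
      have hctk0F : (Y.take j0).count false = (z.take (j0-1)).count false := by
        rw [htk0]; simp
      have hctkjT : (Y.take (j0+1)).count true = (Y.take j0).count true + 1 := by
        rw [htkj, hbitT.1]; simp
      have hlw' : (z.take (j0-1)).length = j0 - 1 := by rw [List.length_take]; omega
      have hmwB : myB (mirror (z.take (j0-1))) := by
        simp only [myB, length_mirror, count_true_mirror]
        omega
      obtain ⟨d, ⟨hdD, hdm⟩, hdu⟩ := ih (mirror (z.take (j0-1))).length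
        (by rw [length_mirror, hlw']; omega) _ rfl hmwB
      refine ⟨(true :: mirror d) ++ false :: (Y.drop (j0+1)),
        ⟨isDyck_compose (isDyck_mirror hdD) hvsuffD, ?_⟩, ?_⟩
      · rw [mem_pathOf_decomp hπ (isDyck_mirror hdD) hvsuffD]
        refine Or.inr (Or.inl ⟨mirror (z.take (j0-1)), ?_, ?_⟩)
        · rw [mirror_mirror]; exact hdm
        · rw [mirror_mirror]
          exact hYsplit
      · rintro x' ⟨hx'D, hx'm⟩
        have hx'len : x'.length = n := by
          have := length_mem_pathOf hx'm
          rw [hYlen] at this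
          omega
        have hx'ne : x' ≠ [] := by
          intro h0; rw [h0] at hx'len; simp at hx'len; omega
        obtain ⟨u', v', hu', hv', rfl⟩ := dyck_decomp hx'D hx'ne
        rw [mem_pathOf_decomp hπ hu' hv'] at hx'm
        rcases hx'm with h | h
        · exfalso
          rw [← h] at hx'D
          exact hyd hx'D
        rcases h with ⟨s, hs, h⟩ | ⟨w'', hw'', h⟩
        · have hYh : (true :: mirror s) ++ true :: v'
              = (true :: z.take (j0-1)) ++ true :: (Y.drop (j0+1)) := by
            rw [← h]
            exact hYsplit
          have hsp := splitB_unique hv' hvsuffD hYh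
          have hms : mirror s = z.take (j0-1) := by
            have := hsp.1
            injection this
          have hseq : s = mirror (z.take (j0-1)) := by
            rw [← hms, mirror_mirror]
          have hdueq : mirror u' = d := hdu (mirror u') ⟨isDyck_mirror hu', by rw [← hseq]; exact hs⟩
          have hu'eq : u' = mirror d := by rw [← hdueq, mirror_mirror]
          rw [hu'eq, hsp.2]
        · exfalso
          rw [hYdef] at h
          simp at h

-- CHUNK7: final assembly helpers
def Wv (π : List Bool → List ℕ) (x : List Bool) (i : ℕ) : List Bool :=
  List.foldl flipBit x ((π x).take i)

lemma take_pi_nodup {π : List Bool → List ℕ} {x : List Bool} (G : GoodPi π x) (i : ℕ) :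
    ((π x).take i).Nodup := (List.take_sublist _ _).nodup G.nodup

lemma take_pi_mem {π : List Bool → List ℕ} {x : List Bool} (G : GoodPi π x) (i : ℕ) :
    ∀ a ∈ (π x).take i, 1 ≤ a ∧ a ≤ x.length :=
  fun a ha => G.mem a ((List.take_sublist _ _).mem ha)

lemma Wv_length {π : List Bool → List ℕ} {x : List Bool} (i : ℕ) :
    (Wv π x i).length = x.length := length_foldl_flipBit _ _

lemma Wv_getD {π : List Bool → List ℕ} {x : List Bool} (G : GoodPi π x) {p : ℕ} (i : ℕ)
    (hp1 : 1 ≤ p) (hp2 : p ≤ x.length) :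
    (Wv π x i).getD (p-1) false
      = if p ∈ (π x).take i then !(x.getD (p-1) false) else x.getD (p-1) false :=
  getD_foldl_flips _ _ _ (take_pi_nodup G i) (take_pi_mem G i) hp1 hp2

lemma pi_take_succ {π : List Bool → List ℕ} {x : List Bool} {i : ℕ} (hi : i < (π x).length) :
    (π x).take (i+1) = (π x).take i ++ [(π x).getD i 0] := by
  rw [List.take_succ, List.getElem?_eq_getElem hi, List.getD_eq_getElem _ _ hi]
  rfl

lemma pi_getD_not_mem_take {π : List Bool → List ℕ} {x : List Bool} (G : GoodPi π x) {i : ℕ}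
    (hi : i < (π x).length) : (π x).getD i 0 ∉ (π x).take i := by
  intro hm
  rw [List.getD_eq_getElem _ _ hi, List.mem_iff_getElem] at hm
  obtain ⟨n, hn, hne⟩ := hm
  have hlt : n < i := by
    rw [List.length_take] at hn
    omega
  rw [List.getElem_take] at hne
  have := G.nodup.getElem_inj_iff.mp hne
  omega

lemma Wv_succ {π : List Bool → List ℕ} {x : List Bool} {i : ℕ} (hi : i < (π x).length) :
    Wv π x (i+1) = flipBit (Wv π x i) ((π x).getD i 0) := by
  rw [Wv, Wv, pi_take_succ hi, List.foldl_append]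
  rfl

lemma Wv_bit {π : List Bool → List ℕ} {x : List Bool} (G : GoodPi π x) {i : ℕ}
    (hi : i < (π x).length) :
    (Wv π x i).getD ((π x).getD i 0 - 1) false = decide (i % 2 = 1) := by
  have hpi := G.mem _ (getD_mem hi)
  rw [Wv_getD G i hpi.1 hpi.2, if_neg (pi_getD_not_mem_take G hi)]
  exact G.alt i hi

lemma Wv_weight {π : List Bool → List ℕ} {x : List Bool} (hx : isDyck x) (G : GoodPi π x) :
    ∀ i, i ≤ (π x).length → 2 * (Wv π x i).count true = x.length + 2 * (i % 2) := by
  intro i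
  induction i with
  | zero =>
    intro _
    have h1 := hx.1
    have h2 := count_tf x
    simp only [Wv, List.take_zero, List.foldl_nil]
    omega
  | succ i ihh =>
    intro hi
    have hpi := G.mem _ (getD_mem (show i < (π x).length from by omega))
    have hbit := Wv_bit G (show i < (π x).length from by omega)
    have hflip := count_true_flipBit (y := Wv π x i) (a := (π x).getD i 0) hpi.1
      (by rw [Wv_length]; exact hpi.2)
    rw [hbit] at hflip
    have h3 := ihh (by omega)
    rw [Wv_succ (show i < (π x).length from by omega)]
    rcases Nat.even_or_odd i with he | he
    · have h1 : i % 2 = 0 := Nat.even_iff.mp he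
      have h2 : (i+1) % 2 = 1 := by omega
      rw [h1] at hflip h3
      rw [h2]
      rw [show decide ((0:ℕ) = 1) = false from rfl, show (false : Bool).toNat = 0 from rfl,
        show (!(false:Bool)).toNat = 1 from rfl] at hflip
      omega
    · have h1 : i % 2 = 1 := Nat.odd_iff.mp he
      have h2 : (i+1) % 2 = 0 := by omega
      rw [h1] at hflip h3
      rw [h2]
      rw [show decide ((1:ℕ) = 1) = true from rfl, show (true : Bool).toNat = 1 from rfl,
        show (!(true:Bool)).toNat = 0 from rfl] at hflip
      omega

lemma Wv_last {π : List Bool → List ℕ} {x : List Bool} (G : GoodPi π x) :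
    Wv π x ((π x).length) = compl x := by
  rw [Wv, List.take_length]
  exact foldl_flips_complete G.nodup G.mem G.len

lemma pathOf_eq_map {π : List Bool → List ℕ} {x : List Bool} :
    pathOf π x = (List.range ((π x).length + 1)).map (Wv π x) := by
  rw [pathOf, scanl_eq_map_range]
  rfl

lemma Wv_inj {π : List Bool → List ℕ} {x : List Bool} (G : GoodPi π x) {i j : ℕ}
    (hij : i < j) (hj : j ≤ (π x).length) : Wv π x i ≠ Wv π x j := by
  intro heq
  have hpi := G.mem _ (getD_mem (show i < (π x).length from by omega))
  set p := (π x).getD i 0 with hpdef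
  have h1 : (Wv π x i).getD (p-1) false = x.getD (p-1) false := by
    rw [Wv_getD G i hpi.1 hpi.2, if_neg (pi_getD_not_mem_take G (by omega))]
  have hmem2 : p ∈ (π x).take j := by
    rw [hpdef, List.getD_eq_getElem _ _ (by omega), List.mem_iff_getElem]
    exact ⟨i, by rw [List.length_take]; omega, by rw [List.getElem_take]⟩
  have h2 : (Wv π x j).getD (p-1) false = !(x.getD (p-1) false) := by
    rw [Wv_getD G j hpi.1 hpi.2, if_pos hmem2]
  rw [heq, h2] at h1
  simp at h1

lemma Wv_inB {π : List Bool → List ℕ} {x : List Bool} (hx : isDyck x) (G : GoodPi π x)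
    {k : ℕ} (hlen : x.length = 2*k) {i : ℕ} (hi : i ≤ (π x).length) : inB k (Wv π x i) := by
  have hwt := Wv_weight hx G i hi
  rw [hlen] at hwt
  constructor
  · rw [Wv_length]; exact hlen
  · rcases Nat.even_or_odd i with he | he
    · left; have h1 : i % 2 = 0 := Nat.even_iff.mp he; omega
    · right; have h1 : i % 2 = 1 := Nat.odd_iff.mp he; omega

lemma countP_pos_range {n c : ℕ} (hc : c < n) :
    (List.range n).countP (fun j => j == c) = 1 := by
  induction n with
  | zero => omega
  | succ n ihn =>
    rw [List.range_succ, List.countP_append]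
    rcases Nat.lt_or_ge c n with h | h
    · have hne : ¬ (n == c) = true := by simp; omega
      rw [ihn h]
      simp [List.countP_cons, hne]
    · have hceq : c = n := by omega
      subst hceq
      have h0 : (List.range c).countP (fun j => j == c) = 0 := by
        rw [List.countP_eq_zero]
        intro a ha
        rw [List.mem_range] at ha
        simp
        omega
      rw [h0]
      simp [List.countP_cons]

lemma Wv_adj {π : List Bool → List ℕ} {x : List Bool} (hx : isDyck x) (G : GoodPi π x)
    {k : ℕ} (hlen : x.length = 2*k) {i : ℕ} (hi : i < (π x).length) :
    GkAdj k (Wv π x i) (Wv π x (i+1)) := by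
  refine ⟨Wv_inB hx G hlen (by omega), Wv_inB hx G hlen (by omega), ?_⟩
  have hpi := G.mem _ (getD_mem hi)
  set p := (π x).getD i 0 with hpdef
  have hcong : (List.range (2*k)).countP
      (fun j => (Wv π x i).getD j false != (Wv π x (i+1)).getD j false)
      = (List.range (2*k)).countP (fun j => j == p - 1) := by
    apply List.countP_congr
    intro j hj
    rw [List.mem_range] at hj
    rw [Wv_succ hi, ← hpdef]
    rcases eq_or_ne j (p-1) with rfl | hne
    · have hself := getD_flipBit_self (y := Wv π x i) (a := p) hpi.1
        (by rw [Wv_length]; exact hpi.2)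
      rw [hself]
      simp
    · have hother := getD_flipBit_other (y := Wv π x i) (a := p) (p := j+1) (by omega)
      simp only [Nat.add_sub_cancel] at hother
      rw [hother]
      simp [hne]
  rw [hcong]
  exact countP_pos_range (by rw [hlen] at hpi; omega)

lemma scanl_getLast? {α β : Type} (f : α → β → α) :
    ∀ (l : List β) (a : α), (List.scanl f a l).getLast? = some (List.foldl f a l) := by
  intro l
  induction l with
  | nil => intro a; simp [List.scanl_nil]
  | cons b t ih =>
    intro a
    rw [List.foldl_cons, ← ih (f a b), List.scanl_cons]
    cases hsc : List.scanl f (f a b) t with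
    | nil =>
      exfalso
      have hh := List.length_scanl (f := f) (init := f a b) (as := t)
      rw [hsc] at hh
      simp at hh
    | cons c cs =>
      rw [List.getLast?_cons_cons]

lemma scanl_getLast {α β : Type} (f : α → β → α) (l : List β) (a : α)
    (h : List.scanl f a l ≠ []) :
    (List.scanl f a l).getLast h = List.foldl f a l := by
  have h1 := scanl_getLast? f l a
  rw [List.getLast?_eq_getLast h] at h1
  injection h1

lemma myB_of_mem_path {π : List Bool → List ℕ} (hπ : IsPiFun π) {x y : List Bool}
    (hx : isDyck x) (hy : y ∈ pathOf π x) : myB y := by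
  have G := goodPi_all hπ x.length x rfl hx
  rw [pathOf_eq_map, List.mem_map] at hy
  obtain ⟨i, hi2, rfl⟩ := hy
  rw [List.mem_range] at hi2
  have hw := Wv_weight hx G i (by omega)
  have hl : (Wv π x i).length = x.length := Wv_length i
  simp only [myB]
  rcases Nat.even_or_odd i with he | he
  · have h1 : i % 2 = 0 := Nat.even_iff.mp he
    omega
  · have h1 : i % 2 = 1 := Nat.odd_iff.mp he
    omega

end SA

/-- The cycle factor `C_k`: each cycle `C(x)` is the path `P(x)` closed up by the
complement edge `{x, x̄}`. -/
theorem stmt_10 (π : List Bool → List ℕ) (hπ : IsPiFun π) (k : ℕ) (hk : 1 ≤ k) :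
    (∀ x : List Bool, isDyck x → x.length = 2*k →
      (pathOf π x).length = 2*k + 1 ∧
      (pathOf π x).Nodup ∧
      List.Chain' (GkPlusAdj k) (pathOf π x) ∧
      (∀ h : pathOf π x ≠ [],
        GkPlusAdj k ((pathOf π x).getLast h) ((pathOf π x).head h)))
    ∧ (∀ x x' : List Bool, isDyck x → x.length = 2*k → isDyck x' → x'.length = 2*k →
        x ≠ x' → ∀ y ∈ pathOf π x, y ∉ pathOf π x')
    ∧ (∀ y : List Bool, inB k y → ∃ x : List Bool,
        isDyck x ∧ x.length = 2*k ∧ y ∈ pathOf π x) := by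
  refine ⟨?_, ?_, ?_⟩
  · intro x hx hxlen
    have G := SA.goodPi_all hπ x.length x rfl hx
    have hplen : (π x).length = 2*k := by rw [G.len, hxlen]
    have hmap : pathOf π x = (List.range ((π x).length + 1)).map (SA.Wv π x) :=
      SA.pathOf_eq_map
    refine ⟨?_, ?_, ?_, ?_⟩
    · show (List.scanl flipBit x (π x)).length = 2*k + 1
      rw [List.length_scanl, hplen]
    · rw [hmap]
      refine List.Nodup.map_on ?_ List.nodup_range
      intro i hi j hj hWij
      rw [List.mem_range] at hi hj
      by_contra hne
      rcases Nat.lt_or_ge i j with h | h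
      · exact SA.Wv_inj G h (by omega) hWij
      · exact SA.Wv_inj G (by omega) (by omega) hWij.symm
    · rw [hmap]; show List.IsChain _ _; rw [List.isChain_iff_getElem]
      intro i hi
      simp only [List.length_map, List.length_range] at hi
      simp only [List.get_eq_getElem, List.getElem_map, List.getElem_range]
      exact Or.inl (SA.Wv_adj hx G hxlen (by omega))
    · intro hne
      have hhead : (pathOf π x).head hne = x := SA.scanl_head _ _ _ _
      have hlast : (pathOf π x).getLast hne = compl x := by
        have h1 : (List.scanl flipBit x (π x)).getLast hne = List.foldl flipBit x (π x) :=
          SA.scanl_getLast _ _ _ _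
        exact h1.trans (SA.foldl_flips_complete G.nodup G.mem G.len)
      rw [hhead, hlast]
      have hcT : x.count true = k := by
        have h1 := hx.1
        have h2 := SA.count_tf x
        omega
      refine Or.inr ⟨⟨by rw [SA.length_compl]; exact hxlen, Or.inl ?_⟩,
        ⟨hxlen, Or.inl hcT⟩, Or.inr rfl⟩
      rw [SA.count_true_compl]
      have h1 := hx.1
      have h2 := SA.count_tf x
      omega
  · intro x x' hx hxl hx' hx'l hne y hy hy'
    have hyB : SA.myB y := SA.myB_of_mem_path hπ hx hy
    have hylen : y.length = 2*k := by
      rw [SA.length_mem_pathOf hy, hxl]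
    obtain ⟨x0, _, hx0u⟩ := SA.cover hπ (2*k) y hylen hyB
    have e1 : x = x0 := hx0u x ⟨hx, hy⟩
    have e2 : x' = x0 := hx0u x' ⟨hx', hy'⟩
    exact hne (e1.trans e2.symm)
  · intro y hyB
    have hmy : SA.myB y := by
      simp only [SA.myB]
      rcases hyB.2 with h | h
      · exact Or.inl (by rw [hyB.1]; omega)
      · exact Or.inr (by rw [hyB.1]; omega)
    obtain ⟨x0, ⟨hx0D, hx0m⟩, _⟩ := SA.cover hπ (2*k) y hyB.1 hmy
    refine ⟨x0, hx0D, ?_, hx0m⟩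
    rw [← SA.length_mem_pathOf hx0m, hyB.1]
end

section
/- If the Kneser graph K(n,k) (with n = 2k+1) has a Hamilton cycle (x_1,...,x_N) where N = C(2k+1,k) is odd, then the sequence obtained by alternately taking x_i and the complement of x_i, namely (x_1, x̄_2, x_3, x̄_4, ..., x̄_1, x_2, x̄_3, x_4, ...) traversing the cycle twice, is a Hamilton cycle in the bipartite Kneser graph H(2k+1,k). -/
/-- The alternating double traversal `(x_1, x̄_2, x_3, x̄_4, …, x̄_1, x_2, x̄_3, x_4, …)`
of a cyclic listing `L = (x_1, …, x_N)`, where `x̄` denotes the complement. -/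
def altSeq {n : ℕ} (L : List (Finset (Fin n))) : List (Finset (Fin n)) :=
  ((List.range L.length).map (fun i => if i % 2 = 0 then L.getD i ∅ else (L.getD i ∅)ᶜ))
    ++ ((List.range L.length).map (fun i => if i % 2 = 0 then (L.getD i ∅)ᶜ else L.getD i ∅))

/-- From a Hamilton cycle `L` in the Kneser graph `K(2k+1,k)` (a cyclic listing of all
`k`-subsets of `[2k+1]`, consecutive ones disjoint, of odd length `N = C(2k+1,k)`),
the alternating double traversal `altSeq L` is a Hamilton cycle in the bipartite
Kneser graph `H(2k+1,k)`: its vertices are all `k`- and `(k+1)`-subsets and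
adjacency is strict containment in either direction. -/
theorem stmt_14 (k : ℕ) (hk : 1 ≤ k) (L : List (Finset (Fin (2*k+1))))
    (hlen : L.length = Nat.choose (2*k+1) k)
    (hodd : Odd L.length)
    (hcard : ∀ s ∈ L, s.card = k)
    (hnodup : L.Nodup)
    (hall : ∀ s : Finset (Fin (2*k+1)), s.card = k → s ∈ L)
    (hchain : List.Chain' (fun s t => Disjoint s t) L)
    (hclose : ∀ h : L ≠ [], Disjoint (L.getLast h) (L.head h)) :
    (altSeq L).Nodup
    ∧ (∀ s : Finset (Fin (2*k+1)), s.card = k ∨ s.card = k+1 → s ∈ altSeq L)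
    ∧ (∀ s ∈ altSeq L, s.card = k ∨ s.card = k+1)
    ∧ List.Chain' (fun s t : Finset (Fin (2*k+1)) => s ⊂ t ∨ t ⊂ s) (altSeq L)
    ∧ ∀ h : altSeq L ≠ [],
        ((altSeq L).getLast h ⊂ (altSeq L).head h
          ∨ (altSeq L).head h ⊂ (altSeq L).getLast h) := by
  classical
  set N := L.length with hN
  have hNpos : 0 < N := hlen ▸ Nat.choose_pos (by omega)
  have hLne : L ≠ [] := List.length_pos_iff.mp hNpos
  set f : ℕ → Finset (Fin (2*k+1)) := fun i => L.getD i ∅ with hf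
  have hfget : ∀ i (h : i < N), f i = L[i] := by
    intro i h; exact List.getD_eq_getElem L ∅ h
  have hfc : ∀ i, i < N → (f i).card = k := by
    intro i h
    rw [hfget i h]
    exact hcard _ (List.getElem_mem _)
  have hcompl : ∀ s : Finset (Fin (2*k+1)), s.card = k → sᶜ.card = k+1 := by
    intro s hs
    rw [Finset.card_compl, hs, Fintype.card_fin]
    omega
  have hss : ∀ s t : Finset (Fin (2*k+1)), s.card = k → t.card = k →
      Disjoint s t → s ⊂ tᶜ := by
    intro s t hs ht hd
    refine (le_compl_iff_disjoint_right.mpr hd).ssubset_of_ne ?_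
    intro h
    have h2 := hcompl t ht
    rw [← h, hs] at h2
    omega
  have hfi : ∀ i, i < N → ∀ j, j < N → f i = f j → i = j := by
    intro i hi j hj h
    rw [hfget i hi, hfget j hj] at h
    exact (hnodup.getElem_inj_iff).mp h
  -- no even-index value can equal an odd-index value etc.: card mismatch helper
  have hnemix : ∀ i, i < N → ∀ j, j < N → f i ≠ (f j)ᶜ := by
    intro i hi j hj h
    have e1 := hfc i hi
    have e2 := hcompl _ (hfc j hj)
    rw [h, e2] at e1
    omega
  -- the two halves
  set g : ℕ → Finset (Fin (2*k+1)) := fun i => if i % 2 = 0 then f i else (f i)ᶜ with hg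
  set g' : ℕ → Finset (Fin (2*k+1)) := fun i => if i % 2 = 0 then (f i)ᶜ else f i with hg'
  set A := (List.range N).map g with hA
  set B := (List.range N).map g' with hB
  have hAlt : altSeq L = A ++ B := rfl
  have hAlen : A.length = N := by simp [hA]
  have hBlen : B.length = N := by simp [hB]
  have hAne : A ≠ [] := by
    rw [← List.length_pos_iff, hAlen]; exact hNpos
  have hBne : B ≠ [] := by
    rw [← List.length_pos_iff, hBlen]; exact hNpos
  have hAget : ∀ i (h : i < N), A[i]'(by omega) = g i := by
    intro i h; simp [hA]
  have hBget : ∀ i (h : i < N), B[i]'(by omega) = g' i := by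
    intro i h; simp [hB]
  -- cards of g, g'
  have hgc : ∀ i, i < N → (g i).card = k ∨ (g i).card = k+1 := by
    intro i h
    simp only [hg]
    split
    · exact Or.inl (hfc i h)
    · exact Or.inr (hcompl _ (hfc i h))
  have hg'c : ∀ i, i < N → (g' i).card = k ∨ (g' i).card = k+1 := by
    intro i h
    simp only [hg']
    split
    · exact Or.inr (hcompl _ (hfc i h))
    · exact Or.inl (hfc i h)
  -- disjointness of consecutive elements of L
  have hdisj : ∀ i, i + 1 < N → Disjoint (f i) (f (i+1)) := by
    unfold List.Chain' at hchain; rw [List.isChain_iff_getElem] at hchain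
    intro i h
    have := hchain i (by omega)
    simpa [List.get_eq_getElem, ← hfget i (by omega), ← hfget (i+1) (by omega)] using this
  have hdisj0 : Disjoint (f (N-1)) (f 0) := by
    have := hclose hLne
    rwa [List.getLast_eq_getElem, List.head_eq_getElem,
      ← hfget (N-1) (by omega), ← hfget 0 (by omega)] at this
  obtain ⟨m, hm⟩ := hodd
  -- Nodup
  have hAnodup : A.Nodup := by
    refine List.Nodup.map_on ?_ List.nodup_range
    intro i hi j hj hij
    rw [List.mem_range] at hi hj
    simp only [hg] at hij
    by_cases h1 : i % 2 = 0 <;> by_cases h2 : j % 2 = 0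
    · rw [if_pos h1, if_pos h2] at hij; exact hfi i hi j hj hij
    · rw [if_pos h1, if_neg h2] at hij
      exact absurd hij (hnemix i hi j hj)
    · rw [if_neg h1, if_pos h2] at hij
      exact absurd hij.symm (hnemix j hj i hi)
    · rw [if_neg h1, if_neg h2] at hij
      exact hfi i hi j hj (by rw [← compl_compl (f i), hij, compl_compl])
  have hBnodup : B.Nodup := by
    refine List.Nodup.map_on ?_ List.nodup_range
    intro i hi j hj hij
    rw [List.mem_range] at hi hj
    simp only [hg'] at hij
    by_cases h1 : i % 2 = 0 <;> by_cases h2 : j % 2 = 0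
    · rw [if_pos h1, if_pos h2] at hij
      exact hfi i hi j hj (by rw [← compl_compl (f i), hij, compl_compl])
    · rw [if_pos h1, if_neg h2] at hij
      exact absurd hij.symm (hnemix j hj i hi)
    · rw [if_neg h1, if_pos h2] at hij
      exact absurd hij (hnemix i hi j hj)
    · rw [if_neg h1, if_neg h2] at hij; exact hfi i hi j hj hij
  have hABdisj : A.Disjoint B := by
    intro s hsA hsB
    rw [hA, List.mem_map] at hsA
    rw [hB, List.mem_map] at hsB
    obtain ⟨i, hi, hgi⟩ := hsA
    obtain ⟨j, hj, hgj⟩ := hsB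
    rw [List.mem_range] at hi hj
    have hij : g i = g' j := by rw [hgi, hgj]
    simp only [hg, hg'] at hij
    by_cases h1 : i % 2 = 0 <;> by_cases h2 : j % 2 = 0
    · rw [if_pos h1, if_pos h2] at hij
      exact absurd hij (hnemix i hi j hj)
    · rw [if_pos h1, if_neg h2] at hij
      have := hfi i hi j hj hij; omega
    · rw [if_neg h1, if_pos h2] at hij
      have := hfi i hi j hj (by rw [← compl_compl (f i), hij, compl_compl]); omega
    · rw [if_neg h1, if_neg h2] at hij
      exact absurd hij.symm (hnemix j hj i hi)
  refine ⟨?_, ?_, ?_, ?_, ?_⟩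
  · -- Nodup
    rw [hAlt, List.nodup_append]
    exact ⟨hAnodup, hBnodup, fun a ha b hb hab => hABdisj ha (hab ▸ hb)⟩
  · -- coverage
    intro s hs
    rcases hs with hs | hs
    · obtain ⟨i, hi, hgi⟩ := List.mem_iff_getElem.mp (hall s hs)
      rw [← hfget i hi] at hgi
      rw [hAlt]
      by_cases h1 : i % 2 = 0
      · refine List.mem_append_left _ ?_
        rw [hA, List.mem_map]
        exact ⟨i, List.mem_range.mpr hi, by simp only [hg]; rw [if_pos h1, hgi]⟩
      · refine List.mem_append_right _ ?_
        rw [hB, List.mem_map]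
        exact ⟨i, List.mem_range.mpr hi, by simp only [hg']; rw [if_neg h1, hgi]⟩
    · have hsc : sᶜ.card = k := by
        rw [Finset.card_compl, hs, Fintype.card_fin]; omega
      obtain ⟨i, hi, hgi⟩ := List.mem_iff_getElem.mp (hall sᶜ hsc)
      rw [← hfget i hi] at hgi
      have hgi' : (f i)ᶜ = s := by rw [hgi, compl_compl]
      rw [hAlt]
      by_cases h1 : i % 2 = 0
      · refine List.mem_append_right _ ?_
        rw [hB, List.mem_map]
        exact ⟨i, List.mem_range.mpr hi, by simp only [hg']; rw [if_pos h1, hgi']⟩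
      · refine List.mem_append_left _ ?_
        rw [hA, List.mem_map]
        exact ⟨i, List.mem_range.mpr hi, by simp only [hg]; rw [if_neg h1, hgi']⟩
  · -- cards
    intro s hs
    rw [hAlt, List.mem_append] at hs
    rcases hs with hs | hs
    · rw [hA, List.mem_map] at hs
      obtain ⟨i, hi, hgi⟩ := hs
      rw [List.mem_range] at hi
      rw [← hgi]; exact hgc i hi
    · rw [hB, List.mem_map] at hs
      obtain ⟨i, hi, hgi⟩ := hs
      rw [List.mem_range] at hi
      rw [← hgi]; exact hg'c i hi
  · -- chain
    rw [hAlt]; unfold List.Chain'; rw [List.isChain_append]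
    refine ⟨?_, ?_, ?_⟩
    · rw [List.isChain_iff_getElem]
      intro i hi
      rw [hAlen] at hi
      rw [hAget i (by omega), hAget (i+1) (by omega)]
      simp only [hg]
      by_cases h1 : i % 2 = 0
      · rw [if_pos h1, if_neg (by omega)]
        exact Or.inl (hss _ _ (hfc i (by omega)) (hfc (i+1) (by omega)) (hdisj i (by omega)))
      · rw [if_neg h1, if_pos (by omega)]
        exact Or.inr (hss _ _ (hfc (i+1) (by omega)) (hfc i (by omega)) (hdisj i (by omega)).symm)
    · rw [List.isChain_iff_getElem]
      intro i hi
      rw [hBlen] at hi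
      rw [hBget i (by omega), hBget (i+1) (by omega)]
      simp only [hg']
      by_cases h1 : i % 2 = 0
      · rw [if_pos h1, if_neg (by omega)]
        exact Or.inr (hss _ _ (hfc (i+1) (by omega)) (hfc i (by omega)) (hdisj i (by omega)).symm)
      · rw [if_neg h1, if_pos (by omega)]
        exact Or.inl (hss _ _ (hfc i (by omega)) (hfc (i+1) (by omega)) (hdisj i (by omega)))
    · intro x hx y hy
      rw [List.getLast?_eq_getElem?, hAlen,
        List.getElem?_eq_getElem (by omega : N - 1 < A.length)] at hx
      rw [List.head?_eq_getElem?, List.getElem?_eq_getElem (by omega : 0 < B.length)] at hy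
      simp only [Option.mem_some_iff] at hx hy
      rw [hAget (N-1) (by omega)] at hx
      rw [hBget 0 (by omega)] at hy
      have hpar : (N - 1) % 2 = 0 := by omega
      subst hx hy
      simp only [hg, hg', if_pos hpar, if_pos (by norm_num : 0 % 2 = 0)]
      exact Or.inl (hss _ _ (hfc (N-1) (by omega)) (hfc 0 (by omega)) hdisj0)
  · -- closing edge
    intro h
    have hlast : (altSeq L).getLast h = g' (N-1) := by
      rw [show (altSeq L).getLast h = B.getLast hBne from List.getLast_append_of_ne_nil h hBne,
        List.getLast_eq_getElem]
      have : B.length - 1 = N - 1 := by rw [hBlen]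
      rw [show B[B.length - 1]'(by omega) = B[N-1]'(by omega) from by congr 1]
      exact hBget (N-1) (by omega)
    have hhead : (altSeq L).head h = g 0 := by
      rw [show (altSeq L).head h = A.head hAne from List.head_append_left hAne,
        List.head_eq_getElem]
      exact hAget 0 (by omega)
    rw [hlast, hhead]
    have hpar : (N - 1) % 2 = 0 := by omega
    simp only [hg, hg', if_pos hpar, if_pos (by norm_num : 0 % 2 = 0)]
    exact Or.inr (hss _ _ (hfc 0 (by omega)) (hfc (N-1) (by omega)) hdisj0.symm)
end

section
/- Let G be a graph, let C_1, ..., C_ℓ be vertex-disjoint cycles in G, and let C′ be a cycle of length 2ℓ in G that shares exactly one edge with each C_i and whose remaining ℓ edges join vertices of distinct cycles among C_1,...,C_ℓ, with shared and non-shared edges alternating along C′. Then the symmetric difference of the edge set of C′ with the union of the edge sets of C_1,...,C_ℓ is a single cycle whose vertex set is the union of the vertex sets of C_1,...,C_ℓ. -/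
open SimpleGraph Walk

section CycleGlueHelpers
variable {V : Type*} {G : SimpleGraph V}

private lemma edges_get_eq' {x y : V} (p : G.Walk x y) : ∀ n (hn : n < p.edges.length),
    p.edges.get ⟨n, hn⟩ = s(p.getVert n, p.getVert (n+1)) := by
  induction p with
  | nil => intro n hn; simp at hn
  | cons h q ih =>
    intro n hn
    cases n with
    | zero => simp [Walk.getVert_zero, Walk.getVert_cons_succ]
    | succ m =>
      simp only [Walk.edges_cons, List.get_cons_succ, Walk.getVert_cons_succ]
      exact ih m (by simpa [Walk.edges_cons] using hn)

private lemma mem_support_iff_mem_tail' {x : V} {c : G.Walk x x} (hnil : ¬c.Nil) (y : V) :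
    y ∈ c.support ↔ y ∈ c.support.tail := by
  cases c with
  | nil => simp at hnil
  | cons h q =>
    simp only [Walk.support_cons, List.tail_cons, List.mem_cons]
    constructor
    · rintro (rfl | hy)
      · exact q.end_mem_support
      · exact hy
    · exact Or.inr

private lemma path_edge_start' {a c : V} {p : G.Walk a c} (hp : p.IsPath) {e : Sym2 V}
    (he : e ∈ p.edges) (ha : a ∈ e) :
    ∃ (x : V) (h : G.Adj a x) (q : G.Walk x c), p = Walk.cons h q ∧ e = s(a, x) := by
  cases p with
  | nil => simp at he
  | cons h q =>
    rename_i x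
    rw [Walk.edges_cons, List.mem_cons] at he
    rcases he with rfl | he
    · exact ⟨x, h, q, rfl, rfl⟩
    · exfalso
      obtain ⟨b, rfl⟩ := (Sym2.mem_iff_exists).mp ha
      have : a ∈ q.support := q.fst_mem_support_of_mem_edges he
      rw [Walk.cons_isPath_iff] at hp
      exact hp.2 this

private lemma cycle_split_base' {a b : V} {c : G.Walk a a} (hc : c.IsCycle)
    (he : s(a,b) ∈ c.edges) :
    ∃ P : G.Walk a b, P.IsPath ∧ (∀ e, e ∈ P.edges ↔ e ∈ c.edges ∧ e ≠ s(a,b)) ∧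
      (∀ y, y ∈ P.support ↔ y ∈ c.support) := by
  cases c with
  | nil => simp at he
  | cons h q =>
    rename_i y
    have hcyc := hc
    rw [Walk.cons_isCycle_iff] at hcyc
    obtain ⟨hqpath, hfe⟩ := hcyc
    rw [Walk.edges_cons, List.mem_cons] at he
    rcases he with he1 | he2
    · have hby : b = y := by
        rcases Sym2.eq_iff.mp he1 with ⟨-, h2⟩ | ⟨h1, h2⟩
        · exact h2
        · exact absurd (h1 ▸ h) G.irrefl
      subst hby
      refine ⟨q.reverse, hqpath.reverse, ?_, ?_⟩
      · intro e
        rw [Walk.edges_reverse, List.mem_reverse, Walk.edges_cons, List.mem_cons]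
        constructor
        · intro hq
          exact ⟨Or.inr hq, fun hcon => hfe (hcon ▸ hq)⟩
        · rintro ⟨(rfl | hq), hne⟩
          · exact absurd rfl hne
          · exact hq
      · intro z
        rw [Walk.support_reverse, List.mem_reverse, Walk.support_cons, List.mem_cons]
        constructor
        · exact Or.inr
        · rintro (rfl | hz)
          · exact q.end_mem_support
          · exact hz
    · have haq : s(a,b) ∈ q.reverse.edges := by rwa [Walk.edges_reverse, List.mem_reverse]
      obtain ⟨x, h2, r, hq, hex⟩ := path_edge_start' hqpath.reverse haq (by simp)
      have hbx : b = x := by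
        rcases Sym2.eq_iff.mp hex with ⟨-, h2'⟩ | ⟨h1', h2'⟩
        · exact h2'
        · exact absurd (h1' ▸ h2) G.irrefl
      subst hbx
      have hq' : q = r.reverse.append (Walk.cons h2.symm Walk.nil) := by
        have := congrArg Walk.reverse hq
        rwa [Walk.reverse_reverse, Walk.reverse_cons] at this
      have hrpath : r.reverse.IsPath := by
        have := hqpath.reverse
        rw [hq] at this
        exact this.of_cons.reverse
      have hqsup : q.support = r.reverse.support ++ [a] := by
        rw [hq', Walk.support_append]
        simp
      have hqed : q.edges = r.reverse.edges ++ [s(b,a)] := by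
        rw [hq', Walk.edges_append]
        simp
      have hanotin : a ∉ r.reverse.support := by
        have hnd : q.support.Nodup := by
          have := hc.support_nodup
          simpa using this
        rw [hqsup] at hnd
        have := (List.nodup_append'.mp hnd).2.2
        intro hcon
        exact this hcon (by simp)
      have hnd_edges : (Walk.cons h q).edges.Nodup := hc.isTrail.edges_nodup
      refine ⟨Walk.cons h r.reverse, ?_, ?_, ?_⟩
      · rw [Walk.cons_isPath_iff]
        exact ⟨hrpath, hanotin⟩
      · intro e
        rw [Walk.edges_cons, Walk.edges_cons, hqed, List.mem_cons, List.mem_cons,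
          List.mem_append, List.mem_singleton]
        have hba : s(b,a) = s(a,b) := Sym2.eq_swap
        constructor
        · rintro (rfl | hre)
          · refine ⟨Or.inl rfl, fun hcon => hfe ?_⟩
            rw [hcon, hqed]
            simp [hba]
          · refine ⟨Or.inr (Or.inl hre), fun hcon => ?_⟩
            have : s(b,a) ∉ r.reverse.edges := by
              rw [Walk.edges_cons, hqed] at hnd_edges
              have h1 := (List.nodup_cons.mp hnd_edges).2
              have := (List.nodup_append'.mp h1).2.2
              intro hx
              exact this hx (by simp)
            rw [hcon, ← hba] at hre
            exact this hre
        · rintro ⟨(rfl | hre | rfl), hne⟩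
          · exact Or.inl rfl
          · exact Or.inr hre
          · exact absurd hba hne
      · intro z
        rw [Walk.support_cons, Walk.support_cons, hqsup, List.mem_cons, List.mem_cons,
          List.mem_append, List.mem_singleton]
        tauto

private lemma cycle_split' {x a b : V} {c : G.Walk x x} (hc : c.IsCycle)
    (he : s(a,b) ∈ c.edges) :
    ∃ P : G.Walk a b, P.IsPath ∧ (∀ e, e ∈ P.edges ↔ e ∈ c.edges ∧ e ≠ s(a,b)) ∧
      (∀ y, y ∈ P.support ↔ y ∈ c.support) := by
  classical
  have ha : a ∈ c.support := c.fst_mem_support_of_mem_edges he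
  have hc' : (c.rotate a ha).IsCycle := hc.rotate ha
  have hedges : ∀ e, e ∈ (c.rotate a ha).edges ↔ e ∈ c.edges :=
    fun e => (Walk.rotate_edges c a ha).mem_iff
  have hsup : ∀ y, y ∈ (c.rotate a ha).support ↔ y ∈ c.support := by
    intro y
    rw [mem_support_iff_mem_tail' hc'.not_nil, mem_support_iff_mem_tail' hc.not_nil,
      (Walk.support_rotate c a ha).mem_iff]
  obtain ⟨P, hP1, hP2, hP3⟩ := cycle_split_base' hc' ((hedges _).mpr he)
  exact ⟨P, hP1, fun e => by rw [hP2 e, hedges], fun y => by rw [hP3 y, hsup]⟩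

private def glueAux (n : ℕ) (u : ℕ → V)
    (S : ∀ t, t < n → G.Walk (u (2*t)) (u (2*t+1)))
    (hadj : ∀ t, t < n → G.Adj (u (2*t+1)) (u (2*t+2))) :
    (k : ℕ) → (t : ℕ) → t + k ≤ n → G.Walk (u (2*t)) (u (2*(t+k)))
  | 0, t, _ => Walk.nil
  | k+1, t, h =>
      (S t (by omega)).append
        (Walk.cons (hadj t (by omega))
          ((glueAux n u S hadj k (t+1) (by omega)).copy rfl (by congr 1; omega)))

variable {n : ℕ} {u : ℕ → V}
  {S : ∀ t, t < n → G.Walk (u (2*t)) (u (2*t+1))}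
  {hadj : ∀ t, t < n → G.Adj (u (2*t+1)) (u (2*t+2))}

private lemma glueAux_edges_mem (ed : ℕ → Set (Sym2 V))
    (hedS : ∀ t (h : t < n) e, e ∈ (S t h).edges ↔ e ∈ ed t) :
    ∀ k t (h : t + k ≤ n) e, e ∈ (glueAux n u S hadj k t h).edges ↔
      ∃ j, t ≤ j ∧ j < t + k ∧ (e ∈ ed j ∨ e = s(u (2*j+1), u (2*j+2))) := by
  intro k
  induction k with
  | zero => intro t h e; simp [glueAux]; omega
  | succ k ih =>
    intro t h e
    simp only [glueAux, Walk.edges_append, Walk.edges_cons, Walk.edges_copy,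
      List.mem_append, List.mem_cons]
    rw [hedS t (by omega) e, ih (t+1) (by omega) e]
    constructor
    · rintro (h1 | rfl | ⟨j, hj1, hj2, hj3⟩)
      · exact ⟨t, le_refl t, by omega, Or.inl h1⟩
      · exact ⟨t, le_refl t, by omega, Or.inr rfl⟩
      · exact ⟨j, by omega, by omega, hj3⟩
    · rintro ⟨j, hj1, hj2, hj3⟩
      rcases eq_or_lt_of_le hj1 with rfl | hlt
      · rcases hj3 with h1 | rfl
        · exact Or.inl h1
        · exact Or.inr (Or.inl rfl)
      · exact Or.inr (Or.inr ⟨j, by omega, by omega, hj3⟩)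

private lemma glueAux_support_mem (sup : ℕ → Set V)
    (hsupS : ∀ t (h : t < n) x, x ∈ (S t h).support ↔ x ∈ sup t) :
    ∀ k t (h : t + k ≤ n) x, x ∈ (glueAux n u S hadj k t h).support ↔
      x = u (2*(t+k)) ∨ ∃ j, t ≤ j ∧ j < t + k ∧ x ∈ sup j := by
  intro k
  induction k with
  | zero => intro t h x; simp [glueAux]; omega
  | succ k ih =>
    intro t h x
    simp only [glueAux, Walk.mem_support_append_iff, Walk.support_cons, Walk.support_copy,
      List.mem_cons]
    rw [hsupS t (by omega) x, ih (t+1) (by omega) x]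
    have hmid : u (2*t+1) ∈ sup t := (hsupS t (by omega) _).mp
      ((S t (by omega)).end_mem_support)
    have hend : u (2*(t+1+k)) = u (2*(t+(k+1))) := by congr 1; omega
    constructor
    · rintro (h1 | rfl | rfl | ⟨j, hj1, hj2, hj3⟩)
      · exact Or.inr ⟨t, le_refl t, by omega, h1⟩
      · exact Or.inr ⟨t, le_refl t, by omega, hmid⟩
      · exact Or.inl hend
      · exact Or.inr ⟨j, by omega, by omega, hj3⟩
    · rintro (rfl | ⟨j, hj1, hj2, hj3⟩)
      · exact Or.inr (Or.inr (Or.inl hend.symm))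
      · rcases eq_or_lt_of_le hj1 with rfl | hlt
        · exact Or.inl hj3
        · exact Or.inr (Or.inr (Or.inr ⟨j, by omega, by omega, hj3⟩))

private lemma glueAux_support_nodup (sup : ℕ → Set V)
    (hsupS : ∀ t (h : t < n) x, x ∈ (S t h).support ↔ x ∈ sup t)
    (hpath : ∀ t (h : t < n), (S t h).IsPath)
    (hdisj : ∀ i j, i < n → j < n → i ≠ j → ∀ x, x ∈ sup i → x ∉ sup j) :
    ∀ k t (h : t + k ≤ n), (∀ j, t ≤ j → j < t + k → u (2*(t+k)) ∉ sup j) →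
      (glueAux n u S hadj k t h).support.Nodup := by
  intro k
  induction k with
  | zero => intro t h _; simp [glueAux]
  | succ k ih =>
    intro t h hend
    simp only [glueAux, Walk.support_append, Walk.support_cons, Walk.support_copy,
      List.tail_cons]
    rw [List.nodup_append']
    refine ⟨(hpath t (by omega)).support_nodup, ih (t+1) (by omega) ?_, ?_⟩
    · intro j hj1 hj2
      have : u (2*(t+1+k)) = u (2*(t+(k+1))) := by congr 1; omega
      rw [this]
      exact hend j (by omega) (by omega)
    · intro x hx hx'
      have hxt : x ∈ sup t := (hsupS t (by omega) x).mp hx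
      have := (glueAux_support_mem sup hsupS k (t+1) (by omega) x).mp hx'
      rcases this with rfl | ⟨j, hj1, hj2, hj3⟩
      · have : u (2*(t+1+k)) = u (2*(t+(k+1))) := by congr 1; omega
        rw [this] at hxt
        exact hend t (le_refl t) (by omega) hxt
      · exact hdisj t j (by omega) (by omega) (by omega) x hxt hj3

private lemma glueAux_edges_nodup (ed : ℕ → Set (Sym2 V))
    (hedS : ∀ t (h : t < n) e, e ∈ (S t h).edges ↔ e ∈ ed t)
    (hpath : ∀ t (h : t < n), (S t h).IsPath)
    (hed_disj : ∀ i j, i < n → j < n → i ≠ j → ∀ e, e ∈ ed i → e ∉ ed j)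
    (hodd_notin : ∀ t, t < n → ∀ j, j < n → s(u (2*t+1), u (2*t+2)) ∉ ed j)
    (hodd_ne : ∀ t t', t < n → t' < n → t ≠ t' →
      s(u (2*t+1), u (2*t+2)) ≠ s(u (2*t'+1), u (2*t'+2))) :
    ∀ k t (h : t + k ≤ n), (glueAux n u S hadj k t h).edges.Nodup := by
  intro k
  induction k with
  | zero => intro t h; simp [glueAux]
  | succ k ih =>
    intro t h
    simp only [glueAux, Walk.edges_append, Walk.edges_cons, Walk.edges_copy]
    rw [List.nodup_append']
    refine ⟨(hpath t (by omega)).isTrail.edges_nodup, ?_, ?_⟩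
    · rw [List.nodup_cons]
      refine ⟨?_, ih (t+1) (by omega)⟩
      intro hmem
      have := (glueAux_edges_mem ed hedS k (t+1) (by omega) _).mp hmem
      obtain ⟨j, hj1, hj2, hj3⟩ := this
      rcases hj3 with hj3 | hj3
      · exact hodd_notin t (by omega) j (by omega) hj3
      · exact hodd_ne t j (by omega) (by omega) (by omega) hj3
    · intro e he he'
      have het : e ∈ ed t := (hedS t (by omega) e).mp he
      rcases List.mem_cons.mp he' with rfl | he''
      · exact hodd_notin t (by omega) t (by omega) het
      · have := (glueAux_edges_mem ed hedS k (t+1) (by omega) e).mp he''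
        obtain ⟨j, hj1, hj2, hj3⟩ := this
        rcases hj3 with hj3 | rfl
        · exact hed_disj t j (by omega) (by omega) (by omega) e het hj3
        · exact hodd_notin j (by omega) t (by omega) het

end CycleGlueHelpers

/-- Joining vertex-disjoint cycles `C 0, …, C (ℓ-1)` via a flipping `2ℓ`-cycle `C'`:
`C'` shares exactly one edge with each `C i`, the shared and non-shared edges alternate
along `C'`, and each non-shared edge joins two distinct cycles. Then the symmetric
difference of the edge set of `C'` with the union of the edge sets of the `C i` is a
single cycle on the union of the vertex sets of the `C i`. -/
theorem stmt_15 {V : Type*} (G : SimpleGraph V) (ℓ : ℕ) (hℓ : 2 ≤ ℓ)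
    (v : Fin ℓ → V) (C : (i : Fin ℓ) → G.Walk (v i) (v i))
    (hC : ∀ i, (C i).IsCycle)
    (hdisj : ∀ i j, i ≠ j → ∀ x, x ∈ (C i).support → x ∉ (C j).support)
    (w : V) (C' : G.Walk w w) (hC' : C'.IsCycle) (hlen : C'.length = 2 * ℓ)
    (hshare : ∀ i, ∃! e : Sym2 V, e ∈ C'.edges ∧ e ∈ (C i).edges)
    (halt : ∀ (n : ℕ) (hn : n < C'.edges.length),
      ((∃ i, C'.edges.get ⟨n, hn⟩ ∈ (C i).edges) ↔ n % 2 = 0))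
    (hjoin : ∀ a b : V, s(a,b) ∈ C'.edges → (∀ i, s(a,b) ∉ (C i).edges) →
      ∃ i j, i ≠ j ∧ a ∈ (C i).support ∧ b ∈ (C j).support) :
    ∃ (u : V) (D : G.Walk u u), D.IsCycle ∧
      (∀ e : Sym2 V, e ∈ D.edges ↔ Xor' (e ∈ C'.edges) (∃ i, e ∈ (C i).edges)) ∧
      (∀ x : V, x ∈ D.support ↔ ∃ i, x ∈ (C i).support) := by
  classical
  have hlenE : C'.edges.length = 2 * ℓ := by rw [Walk.length_edges, hlen]
  have hget : ∀ m (hm : m < C'.edges.length),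
      C'.edges.get ⟨m, hm⟩ = s(C'.getVert m, C'.getVert (m+1)) := edges_get_eq' C'
  have hnodupE : C'.edges.Nodup := hC'.isTrail.edges_nodup
  -- even edges of C'
  have hEmem : ∀ t, t < ℓ → s(C'.getVert (2*t), C'.getVert (2*t+1)) ∈ C'.edges := by
    intro t ht
    have hm : 2*t < C'.edges.length := by omega
    rw [← hget (2*t) hm]
    exact List.get_mem _ _
  have hOmem : ∀ t, t < ℓ → s(C'.getVert (2*t+1), C'.getVert (2*t+2)) ∈ C'.edges := by
    intro t ht
    have hm : 2*t+1 < C'.edges.length := by omega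
    rw [← hget (2*t+1) hm]
    exact List.get_mem _ _
  -- choose which cycle each even edge belongs to
  have hexσ : ∀ t, t < ℓ → ∃ i, s(C'.getVert (2*t), C'.getVert (2*t+1)) ∈ (C i).edges := by
    intro t ht
    have hm : 2*t < C'.edges.length := by omega
    have := (halt (2*t) hm).mpr (by omega)
    rwa [hget (2*t) hm] at this
  choose σ hσ using hexσ
  -- the cycles C i are pairwise edge-disjoint
  have hCed : ∀ i j, i ≠ j → ∀ e : Sym2 V, e ∈ (C i).edges → e ∉ (C j).edges := by
    intro i j hij e
    induction e with
    | _ a b =>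
      intro hei hej
      exact hdisj i j hij a ((C i).fst_mem_support_of_mem_edges hei)
        ((C j).fst_mem_support_of_mem_edges hej)
  have huniq : ∀ i (e e' : Sym2 V), e ∈ C'.edges → e ∈ (C i).edges → e' ∈ C'.edges →
      e' ∈ (C i).edges → e = e' := by
    intro i e e' h1 h2 h3 h4
    obtain ⟨E, -, hEu⟩ := hshare i
    rw [hEu e ⟨h1, h2⟩, hEu e' ⟨h3, h4⟩]
  have hσinj : ∀ t t' (ht : t < ℓ) (ht' : t' < ℓ), σ t ht = σ t' ht' → t = t' := by
    intro t t' ht ht' heq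
    have h1 := hσ t ht
    have h2 := hσ t' ht'
    rw [heq] at h1
    have heqe := huniq (σ t' ht') _ _ (hEmem t ht) h1 (hEmem t' ht') h2
    have hm : 2*t < C'.edges.length := by omega
    have hm' : 2*t' < C'.edges.length := by omega
    rw [← hget (2*t) hm, ← hget (2*t') hm'] at heqe
    have := (List.Nodup.get_inj_iff hnodupE).mp heqe
    have h2t : 2*t = 2*t' := congrArg Fin.val this
    omega
  have hσsurj : ∀ i, ∃ t, ∃ ht : t < ℓ, σ t ht = i := by
    intro i
    obtain ⟨e, ⟨heC', heCi⟩, -⟩ := hshare i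
    obtain ⟨mf, hme⟩ := List.mem_iff_get.mp heC'
    have hev : mf.1 % 2 = 0 := (halt mf.1 mf.2).mp ⟨i, by rw [hme]; exact heCi⟩
    have hmlt : mf.1 < 2 * ℓ := by have := mf.2; omega
    obtain ⟨t, ht, hmt⟩ : ∃ t, t < ℓ ∧ mf.1 = 2*t := ⟨mf.1/2, by omega, by omega⟩
    have heE : e = s(C'.getVert (2*t), C'.getVert (2*t+1)) := by
      rw [← hme, hget mf.1 mf.2, hmt]
    refine ⟨t, ht, ?_⟩
    by_contra hne
    exact hCed _ _ hne _ (hσ t ht) (heE ▸ heCi)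
  -- segments: each cycle minus its shared edge
  have hS : ∀ t (ht : t < ℓ), ∃ P : G.Walk (C'.getVert (2*t)) (C'.getVert (2*t+1)),
      P.IsPath ∧
      (∀ e, e ∈ P.edges ↔ e ∈ (C (σ t ht)).edges ∧
        e ≠ s(C'.getVert (2*t), C'.getVert (2*t+1))) ∧
      (∀ y, y ∈ P.support ↔ y ∈ (C (σ t ht)).support) :=
    fun t ht => cycle_split' (hC _) (hσ t ht)
  choose S hS1 hS2 hS3 using hS
  have hadj : ∀ t, t < ℓ → G.Adj (C'.getVert (2*t+1)) (C'.getVert (2*t+2)) := by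
    intro t ht
    exact C'.adj_getVert_succ (by omega : 2*t+1 < C'.length)
  set ed : ℕ → Set (Sym2 V) := fun t =>
    {e | ∃ ht : t < ℓ, e ∈ (C (σ t ht)).edges ∧
      e ≠ s(C'.getVert (2*t), C'.getVert (2*t+1))} with hed_def
  set sup : ℕ → Set V := fun t => {x | ∃ ht : t < ℓ, x ∈ (C (σ t ht)).support} with hsup_def
  have hedS : ∀ t (h : t < ℓ) e, e ∈ (S t h).edges ↔ e ∈ ed t := by
    intro t h e
    rw [hS2 t h e]
    constructor
    · exact fun hx => ⟨h, hx⟩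
    · rintro ⟨ht, h1, h2⟩; exact ⟨h1, h2⟩
  have hsupS : ∀ t (h : t < ℓ) x, x ∈ (S t h).support ↔ x ∈ sup t := by
    intro t h x
    rw [hS3 t h x]
    constructor
    · exact fun hx => ⟨h, hx⟩
    · rintro ⟨ht, h1⟩; exact h1
  have hsup_disj : ∀ i j, i < ℓ → j < ℓ → i ≠ j → ∀ x, x ∈ sup i → x ∉ sup j := by
    rintro i j hi hj hij x ⟨hi', hxi⟩ ⟨hj', hxj⟩
    have hσne : σ i hi' ≠ σ j hj' := fun hcon => hij (hσinj i j hi' hj' hcon)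
    exact hdisj _ _ hσne x hxi hxj
  have hed_disj : ∀ i j, i < ℓ → j < ℓ → i ≠ j → ∀ e, e ∈ ed i → e ∉ ed j := by
    rintro i j hi hj hij e ⟨hi', hei, -⟩ ⟨hj', hej, -⟩
    have hσne : σ i hi' ≠ σ j hj' := fun hcon => hij (hσinj i j hi' hj' hcon)
    exact hCed _ _ hσne e hei hej
  have hodd_notCi : ∀ t, t < ℓ → ∀ i, s(C'.getVert (2*t+1), C'.getVert (2*t+2)) ∉ (C i).edges := by
    intro t ht i hcon
    have hm : 2*t+1 < C'.edges.length := by omega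
    have := (halt (2*t+1) hm).mp ⟨i, by rw [hget (2*t+1) hm]; exact hcon⟩
    omega
  have hodd_notin : ∀ t, t < ℓ → ∀ j, j < ℓ →
      s(C'.getVert (2*t+1), C'.getVert (2*t+2)) ∉ ed j := by
    rintro t ht j hj ⟨hj', hej, -⟩
    exact hodd_notCi t ht _ hej
  have hodd_ne : ∀ t t', t < ℓ → t' < ℓ → t ≠ t' →
      s(C'.getVert (2*t+1), C'.getVert (2*t+2)) ≠
        s(C'.getVert (2*t'+1), C'.getVert (2*t'+2)) := by
    intro t t' ht ht' htt' hcon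
    have hm : 2*t+1 < C'.edges.length := by omega
    have hm' : 2*t'+1 < C'.edges.length := by omega
    rw [← hget (2*t+1) hm, ← hget (2*t'+1) hm'] at hcon
    have := (List.Nodup.get_inj_iff hnodupE).mp hcon
    have h2t : 2*t+1 = 2*t'+1 := congrArg Fin.val this
    omega
  have hpath : ∀ t (h : t < ℓ), (S t h).IsPath := hS1
  -- the glued walk
  have h0 : (0:ℕ) < ℓ := by omega
  have hwend : C'.getVert (2*(0+ℓ)) = w := by
    have h1 : 2*(0+ℓ) = 2*ℓ := by omega
    rw [h1, ← hlen]
    exact C'.getVert_length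
  have hw0 : C'.getVert (2*0) = w := C'.getVert_zero
  set D0 : G.Walk (C'.getVert (2*0)) (C'.getVert (2*(0+ℓ))) :=
    glueAux ℓ C'.getVert S hadj ℓ 0 (by omega) with hD0_def
  set D : G.Walk w w := D0.copy hw0 hwend with hD_def
  have hwsup0 : w ∈ sup 0 := by
    refine ⟨h0, ?_⟩
    have := (C (σ 0 h0)).fst_mem_support_of_mem_edges (hσ 0 h0)
    rwa [show C'.getVert (2*0) = w from hw0] at this
  have hDedges : ∀ e, e ∈ D.edges ↔ ∃ j, j < ℓ ∧ (e ∈ ed j ∨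
      e = s(C'.getVert (2*j+1), C'.getVert (2*j+2))) := by
    intro e
    rw [hD_def, Walk.edges_copy, hD0_def, glueAux_edges_mem ed hedS ℓ 0 (by omega) e]
    constructor
    · rintro ⟨j, h1, h2, h3⟩; exact ⟨j, by omega, h3⟩
    · rintro ⟨j, h1, h3⟩; exact ⟨j, by omega, by omega, h3⟩
  have hDsupport : ∀ x, x ∈ D.support ↔ x = w ∨ ∃ j, j < ℓ ∧ x ∈ sup j := by
    intro x
    rw [hD_def, Walk.support_copy, hD0_def, glueAux_support_mem sup hsupS ℓ 0 (by omega) x,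
      hwend]
    constructor
    · rintro (rfl | ⟨j, h1, h2, h3⟩)
      · exact Or.inl rfl
      · exact Or.inr ⟨j, by omega, h3⟩
    · rintro (rfl | ⟨j, h1, h3⟩)
      · exact Or.inl rfl
      · exact Or.inr ⟨j, by omega, by omega, h3⟩
  refine ⟨w, D, ?_, ?_, ?_⟩
  · -- IsCycle
    rw [Walk.isCycle_def]
    refine ⟨?_, ?_, ?_⟩
    · rw [Walk.isTrail_def, hD_def, Walk.edges_copy, hD0_def]
      exact glueAux_edges_nodup ed hedS hpath hed_disj hodd_notin hodd_ne ℓ 0 (by omega)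
    · intro hcon
      have hO : s(C'.getVert (2*0+1), C'.getVert (2*0+2)) ∈ D.edges :=
        (hDedges _).mpr ⟨0, h0, Or.inr rfl⟩
      rw [hcon] at hO
      simp at hO
    · -- support tail nodup
      obtain ⟨m, rfl⟩ : ∃ m, ℓ = m + 1 := ⟨ℓ - 1, by omega⟩
      rw [hD_def, Walk.support_copy, hD0_def]
      have hglue_sup_nodup : (glueAux (m+1) C'.getVert S hadj m 1 (by omega)).support.Nodup := by
        refine glueAux_support_nodup sup hsupS hpath hsup_disj m 1 (by omega) ?_
        intro j hj1 hj2 hcon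
        have h1m : C'.getVert (2*(1+m)) = w := by
          have : (2*(1+m)) = 2*(0+(m+1)) := by omega
          rw [this, hwend]
        rw [h1m] at hcon
        exact hsup_disj 0 j (by omega) (by omega) (by omega) w hwsup0 hcon
      simp only [glueAux, Walk.support_append, Walk.support_cons, Walk.support_copy,
        List.tail_cons]
      rw [(S 0 (by omega)).support_eq_cons, List.cons_append, List.tail_cons]
      rw [List.nodup_append']
      refine ⟨((hS1 0 (by omega)).support_nodup).tail, hglue_sup_nodup, ?_⟩
      intro x hx hx'
      have hxsup : x ∈ sup 0 := (hsupS 0 (by omega) x).mp (List.mem_of_mem_tail hx)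
      have hxne : x ≠ C'.getVert (2*0) := by
        intro hcon
        have := (hS1 0 (by omega)).support_nodup
        rw [(S 0 (by omega)).support_eq_cons, List.nodup_cons] at this
        exact this.1 (hcon ▸ hx)
      have := (glueAux_support_mem sup hsupS m 1 (by omega) x).mp hx'
      rcases this with rfl | ⟨j, hj1, hj2, hj3⟩
      · refine hxne ?_
        have h1m : C'.getVert (2*(1+m)) = w := by
          have : (2*(1+m)) = 2*(0+(m+1)) := by omega
          rw [this, hwend]
        rw [h1m, hw0]
      · exact hsup_disj 0 j (by omega) (by omega) (by omega) x hxsup hj3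
  · -- edge spec
    intro e
    rw [hDedges e]
    unfold Xor'
    constructor
    · rintro ⟨j, hj, he | rfl⟩
      · obtain ⟨hj', h1, h2⟩ := he
        refine Or.inr ⟨⟨σ j hj', h1⟩, ?_⟩
        intro heC'
        exact h2 (huniq (σ j hj') e _ heC' h1 (hEmem j hj') (hσ j hj'))
      · refine Or.inl ⟨hOmem j hj, ?_⟩
        rintro ⟨i, hi⟩
        exact hodd_notCi j hj i hi
    · rintro (⟨heC', hnot⟩ | ⟨⟨i, heCi⟩, hnotC'⟩)
      · obtain ⟨mf, hme⟩ := List.mem_iff_get.mp heC'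
        have hodd : ¬ mf.1 % 2 = 0 := by
          intro hev
          exact hnot (by rw [← hme]; exact (halt mf.1 mf.2).mpr hev)
        have hmlt : mf.1 < 2 * (ℓ) := by have := mf.2; omega
        obtain ⟨j, hj, hmj⟩ : ∃ j, j < ℓ ∧ mf.1 = 2*j+1 := ⟨mf.1/2, by omega, by omega⟩
        refine ⟨j, hj, Or.inr ?_⟩
        rw [← hme, hget mf.1 mf.2, hmj]
      · obtain ⟨t, ht, rfl⟩ := hσsurj i
        refine ⟨t, ht, Or.inl ⟨ht, heCi, ?_⟩⟩
        intro hcon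
        exact hnotC' (hcon ▸ hEmem t ht)
  · -- support spec
    intro x
    rw [hDsupport x]
    constructor
    · rintro (rfl | ⟨j, hj, hj2, hx⟩)
      · exact ⟨σ 0 h0, hwsup0.2⟩
      · exact ⟨σ j hj2, hx⟩
    · rintro ⟨i, hxi⟩
      obtain ⟨t, ht, rfl⟩ := hσsurj i
      exact Or.inr ⟨t, ht, ht, hxi⟩
end

section
/- If τ = {(x_1,m_1),...,(x_ℓ,m_ℓ)} is a flippable tuple on D_k witnessed by a flipping cycle C = (y_1,...,y_{2ℓ}) in G_k, then for every Dyck word u, the tuple uτ := {(u x_i, |u| + m_i)} is a flippable tuple on D_{k+|u|/2}, witnessed by the cycle (ū y_1, ..., ū y_{2ℓ}). -/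
/-- Edges of a path, as a list of unordered pairs. -/
def edgesOf (l : List (List Bool)) : List (Sym2 (List Bool)) :=
  l.zipWith (fun a b => s(a,b)) l.tail

/-- Edges of a closed cycle listed by its vertices. -/
def cycEdges (l : List (List Bool)) : List (Sym2 (List Bool)) :=
  l.zipWith (fun a b => s(a,b)) (l.rotate 1)

/-- `e(x,m)`: the edge of the path `P(x)` along which the `m`-th bit is flipped. -/
def edgeOf (π : List Bool → List ℕ) (x : List Bool) (m : ℕ) : Sym2 (List Bool) :=
  s((pathOf π x).getD ((π x).idxOf m) [], (pathOf π x).getD ((π x).idxOf m + 1) [])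

/-- `ys` is a flipping `2ℓ`-cycle in `G_k` witnessing the marked tuple `τ`:
a cycle through `2·|τ|` vertices whose intersection with the path `P(x)`, for each
Dyck word `x` of length `2k`, consists exactly of the edges `e(x,m)` with `(x,m) ∈ τ`. -/
def IsFlippingCycleFor (π : List Bool → List ℕ) (k : ℕ)
    (τ : Finset (List Bool × ℕ)) (ys : List (List Bool)) : Prop :=
  ys.Nodup ∧ ys.length = 2 * τ.card ∧ List.Chain' (GkAdj k) ys ∧
  (∀ h : ys ≠ [], GkAdj k (ys.getLast h) (ys.head h)) ∧
  (∀ p ∈ τ, edgeOf π p.1 p.2 ∈ cycEdges ys) ∧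
  (∀ x : List Bool, isDyck x → x.length = 2*k →
    ∀ e ∈ cycEdges ys, e ∈ edgesOf (pathOf π x) → ∃ m, (x, m) ∈ τ ∧ e = edgeOf π x m)

/-- `τ` is a flippable tuple on `D_k`: at least three marked Dyck words of length `2k`
with distinct underlying words, witnessed by some flipping cycle. -/
def IsFlippableTuple (π : List Bool → List ℕ) (k : ℕ) (τ : Finset (List Bool × ℕ)) : Prop :=
  3 ≤ τ.card ∧ (∀ p ∈ τ, isDyck p.1 ∧ p.1.length = 2*k ∧ 1 ≤ p.2 ∧ p.2 ≤ 2*k) ∧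
  (∀ p ∈ τ, ∀ q ∈ τ, p.1 = q.1 → p = q) ∧
  ∃ ys, IsFlippingCycleFor π k τ ys


section Aux
open List

lemma length_flipBit (y : List Bool) (a : ℕ) : (flipBit y a).length = y.length := by
  simp [flipBit]

lemma getD_take {α : Type*} {l : List α} {n j : ℕ} (h : j < n) (d : α) :
    (l.take n).getD j d = l.getD j d := by
  by_cases hj : j < l.length
  · rw [getD_eq_getElem _ _ (by simp; omega), getD_eq_getElem _ _ hj, getElem_take]
  · rw [getD_eq_default _ _ (by simp; omega), getD_eq_default _ _ (by omega)]

lemma flipBit_append_left {w : List Bool} (v : List Bool) {a : ℕ} (h1 : 1 ≤ a)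
    (h2 : a ≤ w.length) : flipBit (w ++ v) a = flipBit w a ++ v := by
  have hlt : a - 1 < w.length := by omega
  simp only [flipBit, getD_append _ _ _ _ hlt, set_append, if_pos hlt]

lemma flipBit_append_right (w v : List Bool) {a : ℕ} (h1 : 1 ≤ a) :
    flipBit (w ++ v) (w.length + a) = w ++ flipBit v a := by
  unfold flipBit
  have h : w.length + a - 1 = w.length + (a - 1) := by omega
  rw [h, getD_append_right _ _ _ _ (Nat.le_add_right _ _), Nat.add_sub_cancel_left,
    set_append, if_neg (by omega), Nat.add_sub_cancel_left]

lemma flipBit_cons (b : Bool) (w : List Bool) {a : ℕ} (h : 1 ≤ a) :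
    flipBit (b :: w) (a + 1) = b :: flipBit w a := by
  have := flipBit_append_right [b] w (a := a) h
  simpa [Nat.add_comm] using this

lemma scanl_append {α β : Type*} (f : β → α → β) (b : β) (l₁ l₂ : List α) :
    scanl f b (l₁ ++ l₂) = scanl f b l₁ ++ (scanl f (foldl f b l₁) l₂).tail := by
  induction l₁ generalizing b with
  | nil => cases l₂ <;> simp [scanl]
  | cons a l ih => simp [scanl_cons, ih (f b a)]

lemma scanl_invariant {α β : Type*} {p : β → Prop} {f : β → α → β} {l : List α}
    (hf : ∀ x a, a ∈ l → p x → p (f x a)) :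
    ∀ {b}, p b → ∀ w ∈ scanl f b l, p w := by
  induction l with
  | nil =>
    intro b hb w hw
    simp only [scanl_nil, mem_singleton] at hw; subst hw; exact hb
  | cons a l ih =>
    intro b hb w hw
    simp only [scanl_cons, List.mem_cons, List.mem_append, List.mem_singleton] at hw
    rcases hw with hw | hw
    · subst hw; exact hb
    · exact ih (fun x c hc hx => hf x c (by simp [hc]) hx)
        (hf b a (by simp) hb) w hw

lemma foldl_flip_append {L : List ℕ} (v : List Bool) :
    ∀ {w : List Bool}, (∀ a ∈ L, 1 ≤ a ∧ a ≤ w.length) →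
      foldl flipBit (w ++ v) L = foldl flipBit w L ++ v := by
  induction L with
  | nil => simp
  | cons a L ih =>
    intro w h
    have ha := h a (by simp)
    simp only [foldl_cons, flipBit_append_left v ha.1 ha.2]
    exact ih (fun b hb => by
      have := h b (by simp [hb]); rwa [length_flipBit])

lemma foldl_flip_cons {L : List ℕ} (b : Bool) (h : ∀ a ∈ L, 1 ≤ a) :
    ∀ w, foldl flipBit (b :: w) (L.map (· + 1)) = b :: foldl flipBit w L := by
  induction L with
  | nil => simp
  | cons a L ih =>
    intro w
    simp only [map_cons, foldl_cons, flipBit_cons b w (h a (by simp))]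
    exact ih (fun c hc => h c (by simp [hc])) _

lemma scanl_flip_shift {L : List ℕ} (w : List Bool) (h : ∀ a ∈ L, 1 ≤ a) :
    ∀ s, scanl flipBit (w ++ s) (L.map (fun a => w.length + a)) =
      map (w ++ ·) (scanl flipBit s L) := by
  induction L with
  | nil => intro s; simp [scanl]
  | cons a L ih =>
    intro s
    simp only [map_cons, scanl_cons, flipBit_append_right w s (h a (by simp)), map_append]
    exact congrArg _ (ih (fun c hc => h c (by simp [hc])) _)

lemma length_mirror (x : List Bool) : (mirror x).length = x.length := by simp [mirror]
lemma length_compl (x : List Bool) : (compl x).length = x.length := by unfold _root_.compl; simp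

lemma mirror_flipBit {w : List Bool} {a : ℕ} (h1 : 1 ≤ a) (h2 : a ≤ w.length) :
    flipBit (mirror w) (w.length + 1 - a) = mirror (flipBit w a) := by
  have h3 : a - 1 < w.length := by omega
  have ha : w.length + 1 - a - 1 = w.length - a := by omega
  have hval : (mirror w).getD (w.length - a) false = ! (w[a-1]'h3) := by
    rw [getD_eq_getElem _ _ (by simp [mirror]; omega)]
    simp only [mirror, getElem_map, getElem_reverse, length_reverse]
    congr 2
    omega
  have hval2 : (w.getD (a-1) false) = w[a-1]'h3 := getD_eq_getElem _ _ h3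
  unfold flipBit
  rw [ha, hval, hval2, Bool.not_not]
  apply List.ext_getElem (by simp [mirror])
  intro i hi1 hi2
  have hiw : i < w.length := by simpa [mirror] using hi1
  simp only [mirror, getElem_set, getElem_map, getElem_reverse, length_reverse, length_set]
  by_cases hcase : w.length - a = i
  · rw [if_pos hcase, if_pos (by omega)]
    simp
  · rw [if_neg hcase, if_neg (by omega)]

lemma foldl_flip_mirror : ∀ (L : List ℕ) (w : List Bool),
    (∀ a ∈ L, 1 ≤ a ∧ a ≤ w.length) →
    foldl flipBit (mirror w) (L.map (fun a => w.length + 1 - a)) =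
      mirror (foldl flipBit w L) := by
  intro L
  induction L with
  | nil => simp
  | cons a L ih =>
    intro w h
    have ha := h a (by simp)
    simp only [map_cons, foldl_cons, mirror_flipBit ha.1 ha.2]
    have := ih (flipBit w a) (fun b hb => by rw [length_flipBit]; exact h b (by simp [hb]))
    simpa [length_flipBit] using this

lemma mirror_mirror (x : List Bool) : mirror (mirror x) = x := by
  simp [mirror, ← List.map_reverse, Function.comp_def]

lemma count_not_map (l : List Bool) (b : Bool) :
    (l.map (fun x => !x)).count b = l.count (!b) := by
  rw [count_eq_countP, count_eq_countP, countP_map]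
  apply countP_congr
  intro x _
  cases x <;> cases b <;> simp

lemma count_mirror (b : Bool) (x : List Bool) : (mirror x).count b = x.count (!b) := by
  rw [mirror, count_not_map, count_reverse]

lemma count_compl (b : Bool) (x : List Bool) : (compl x).count b = x.count (!b) :=
  count_not_map x b

lemma length_eq_count (l : List Bool) : l.length = l.count true + l.count false := by
  induction l with
  | nil => simp
  | cons b l ih => cases b <;> simp [List.count_cons] <;> omega

lemma isDyck_nil : isDyck [] := ⟨rfl, by simp⟩

lemma isDyck.two_dvd {x : List Bool} (h : isDyck x) : x.length = 2 * (x.length / 2) := by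
  have := length_eq_count x
  rw [h.1] at this; omega

lemma count_take_add (b : Bool) (j : ℕ) (x : List Bool) :
    (x.take j).count b + (x.drop j).count b = x.count b := by
  rw [← count_append, take_append_drop]

lemma isDyck_append {u v : List Bool} (hu : isDyck u) (hv : isDyck v) : isDyck (u ++ v) := by
  constructor
  · simp [count_append, hu.1, hv.1]
  · intro n
    rw [take_append]
    simp only [count_append]
    have h1 := hu.2 n
    have h2 := hv.2 (n - u.length)
    omega

lemma isDyck_of_append {u x : List Bool} (hu : isDyck u) (h : isDyck (u ++ x)) : isDyck x := by
  have hc := h.1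
  simp only [count_append, hu.1] at hc
  constructor
  · omega
  · intro j
    have h2 := h.2 (u.length + j)
    rw [take_append, take_of_length_le (Nat.le_add_right _ _)] at h2
    simp only [count_append, Nat.add_sub_cancel_left] at h2
    have := hu.1
    omega

lemma isDyck_mirror {x : List Bool} (h : isDyck x) : isDyck (mirror x) := by
  have key : ∀ j, (x.drop j).count true ≤ (x.drop j).count false := by
    intro j
    have e1 := count_take_add true j x
    have e2 := count_take_add false j x
    have := h.2 j
    have := h.1
    omega
  constructor
  · rw [count_mirror, count_mirror]
    exact h.1.symm
  · intro n
    have e : take n (mirror x) = mirror (x.drop (x.length - n)) := by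
      rw [mirror, mirror, ← map_take, take_reverse]
    rw [e, count_mirror, count_mirror]
    exact key _

lemma dyck_head {x : List Bool} (h : isDyck x) (hx : x ≠ []) :
    ∃ tl, x = true :: tl := by
  obtain ⟨hd, tl, rfl⟩ := List.exists_cons_of_ne_nil hx
  cases hd
  · have := h.2 1
    simp [List.take_cons, List.count_cons] at this
  · exact ⟨tl, rfl⟩

lemma dyck_decomp {x : List Bool} (h : isDyck x) (hx : x ≠ []) :
    ∃ a b, isDyck a ∧ isDyck b ∧ x = true :: a ++ false :: b := by
  obtain ⟨tl, rfl⟩ := dyck_head h hx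
  have hex : ∃ n, 0 < n ∧ ((true :: tl).take n).count true = ((true :: tl).take n).count false :=
    ⟨(true :: tl).length, by simp, by rw [take_length]; exact h.1⟩
  classical
  obtain ⟨hn0, hnbal⟩ := Nat.find_spec hex
  set n := Nat.find hex with hndef
  have hmin : ∀ m, m < n → ¬(0 < m ∧ ((true :: tl).take m).count true = ((true :: tl).take m).count false) :=
    fun m hm => Nat.find_min hex hm
  have hnle : n ≤ (true :: tl).length :=
    Nat.find_le ⟨by simp, by rw [take_length]; exact h.1⟩
  have hn1 : n ≠ 1 := by
    intro h1
    rw [h1] at hnbal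
    simp [List.count_cons] at hnbal
  have hn2 : 2 ≤ n := by omega
  have hnx : n - 1 < (true :: tl).length := by omega
  have hnn : n = (n-1) + 1 := by omega
  have htake : (true :: tl).take n = (true :: tl).take (n-1) ++ [(true :: tl)[n-1]] := by
    conv_lhs => rw [hnn]
    rw [take_succ, getElem?_eq_getElem hnx]
    simp
  have hlast : (true :: tl)[n-1] = false := by
    by_contra hc
    have hc' : (true :: tl)[n-1] = true := by simpa using hc
    rw [hc'] at htake
    have h2 := h.2 (n-1)
    rw [htake] at hnbal
    simp [count_append] at hnbal
    omega
  rw [hlast] at htake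
  have hlen_tl : n - 2 ≤ tl.length := by simp at hnle; omega
  have htn1 : (true :: tl).take (n-1) = true :: tl.take (n-2) := by
    rw [take_cons (by omega)]
    congr 2
  refine ⟨tl.take (n-2), (true :: tl).drop n, ?_, ?_, ?_⟩
  · have hbal_a : (tl.take (n-2)).count true = (tl.take (n-2)).count false := by
      rw [htake, htn1] at hnbal
      simp [count_append, List.count_cons] at hnbal
      omega
    refine ⟨hbal_a, ?_⟩
    intro j
    by_cases hj : j < n - 2
    · have hfail := hmin (j+1) (by omega)
      have hle := h.2 (j+1)
      have htj : (true :: tl).take (j+1) = true :: tl.take j := by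
        rw [take_cons (by omega)]
        congr 2
      rw [htj] at hfail hle
      have haj : (tl.take (n-2)).take j = tl.take j := by
        rw [take_take, min_eq_left (by omega)]
      rw [haj]
      simp [List.count_cons] at hfail hle
      omega
    · have haj : (tl.take (n-2)).take j = tl.take (n-2) := by
        rw [take_take, min_eq_right (by omega)]
      rw [haj, hbal_a]
  · have e1 : ((true :: tl).take n).count true + ((true :: tl).drop n).count true
        = (true :: tl).count true := by rw [← count_append, take_append_drop]
    have e2 : ((true :: tl).take n).count false + ((true :: tl).drop n).count false
        = (true :: tl).count false := by rw [← count_append, take_append_drop]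
    have hb := h.1
    constructor
    · omega
    · intro j
      have h2 := h.2 (n + j)
      rw [take_add] at h2
      simp only [count_append] at h2
      omega
  · conv_lhs => rw [← take_append_drop n (true :: tl)]
    rw [htake, htn1]
    simp

lemma compl_nil : compl [] = [] := rfl
lemma compl_cons (b : Bool) (l : List Bool) : compl (b :: l) = (!b) :: compl l := rfl
lemma compl_append (u v : List Bool) : compl (u ++ v) = compl u ++ compl v := by
  unfold _root_.compl; simp

lemma mirror_compl_mirror (x : List Bool) : mirror (compl (mirror x)) = compl x := by
  unfold mirror _root_.compl
  simp [← map_reverse, Function.comp_def]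

lemma foldl_flip_shift {L : List ℕ} (w : List Bool) (h : ∀ a ∈ L, 1 ≤ a) :
    ∀ s, List.foldl flipBit (w ++ s) (L.map (fun a => w.length + a)) =
      w ++ List.foldl flipBit s L := by
  induction L with
  | nil => intro s; simp
  | cons a L ih =>
    intro s
    simp only [map_cons, foldl_cons, flipBit_append_right w s (h a (by simp))]
    exact ih (fun c hc => h c (by simp [hc])) _

lemma pi_main {π : List Bool → List ℕ} (hπ : IsPiFun π) :
    ∀ N u, u.length ≤ N → isDyck u →
      ((∀ a ∈ π u, 1 ≤ a ∧ a ≤ u.length) ∧ (π u).length = u.length ∧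
       List.foldl flipBit u (π u) = compl u ∧
       ∀ v, isDyck v → π (u ++ v) = π u ++ (π v).map (fun a => u.length + a)) := by
  intro N
  induction N with
  | zero =>
    intro u hlen hu
    have hu0 : u = [] := List.length_eq_zero_iff.mp (Nat.le_zero.mp hlen)
    subst hu0
    refine ⟨by simp [hπ.1], by simp [hπ.1], by simp [hπ.1, compl_nil], ?_⟩
    intro v hv
    simp [hπ.1]
  | succ N ih =>
    intro u hlen hu
    by_cases hnil : u = []
    · subst hnil
      refine ⟨by simp [hπ.1], by simp [hπ.1], by simp [hπ.1, compl_nil], ?_⟩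
      intro v hv
      simp [hπ.1]
    obtain ⟨c, d, hc, hd, rfl⟩ := dyck_decomp hu hnil
    have hulen : (true :: c ++ false :: d).length = c.length + d.length + 2 := by
      simp only [List.length_cons, List.length_append]
      omega
    rw [hulen] at hlen
    have hmc : isDyck (mirror c) := isDyck_mirror hc
    have Hm := ih (mirror c) (by rw [length_mirror]; omega) hmc
    have Hd := ih d (by omega) hd
    rw [length_mirror] at Hm
    have hspec := hπ.2 c d hc hd
    have Hent : ∀ a ∈ π (true :: c ++ false :: d), 1 ≤ a ∧ a ≤ (true :: c ++ false :: d).length := by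
      intro a ha
      rw [hspec] at ha
      rw [hulen]
      simp only [List.mem_cons, List.mem_append, List.mem_map] at ha
      rcases ha with (rfl | ⟨b, hb, rfl⟩) | rfl | ⟨b, hb, rfl⟩
      · omega
      · have := Hm.1 b hb; omega
      · omega
      · have := Hd.1 b hb; omega
    have Hlen : (π (true :: c ++ false :: d)).length = (true :: c ++ false :: d).length := by
      rw [hspec, hulen]
      simp [Hm.2.1, Hd.2.1]
      omega
    have Hfold : List.foldl flipBit (true :: c ++ false :: d) (π (true :: c ++ false :: d))
        = compl (true :: c ++ false :: d) := by
      rw [hspec]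
      have hcompl : compl (true :: c ++ false :: d) = false :: compl c ++ true :: compl d := by
        simp [compl_cons, compl_append]
      have e1 : flipBit (true :: c ++ false :: d) (c.length + 2) = true :: c ++ true :: d := by
        have h21 : c.length + 2 = (c.length + 1) + 1 := rfl
        have h22 : c.length + 1 = c.length + 1 := rfl
        rw [h21, show ((true :: c ++ false :: d : List Bool)) = true :: (c ++ false :: d) from rfl,
          flipBit_cons _ _ (by omega)]
        rw [show c.length + 1 = c.length + 1 from rfl]
        rw [show (c ++ false :: d : List Bool) = c ++ (false :: d) from rfl]
        have := flipBit_append_right c (false :: d) (a := 1) le_rfl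
        rw [this]
        simp [flipBit]
      have hB : (π (mirror c)).map (fun a => c.length + 2 - a)
          = ((π (mirror c)).map (fun a => c.length + 1 - a)).map (· + 1) := by
        rw [List.map_map]
        apply List.map_congr_left
        intro a ha
        have := Hm.1 a ha
        simp only [Function.comp]
        omega
      have hL1 : ∀ a ∈ (π (mirror c)).map (fun a => c.length + 1 - a), 1 ≤ a := by
        intro a ha
        simp only [List.mem_map] at ha
        obtain ⟨b, hb, rfl⟩ := ha
        have := Hm.1 b hb
        omega
      have hL2 : ∀ a ∈ (π (mirror c)).map (fun a => c.length + 1 - a), 1 ≤ a ∧ a ≤ c.length := by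
        intro a ha
        simp only [List.mem_map] at ha
        obtain ⟨b, hb, rfl⟩ := ha
        have := Hm.1 b hb
        constructor <;> omega
      have e2 : List.foldl flipBit c ((π (mirror c)).map (fun a => c.length + 1 - a)) = compl c := by
        have h := foldl_flip_mirror (π (mirror c)) (mirror c) (by
          intro a ha; rw [length_mirror]; exact Hm.1 a ha)
        rw [mirror_mirror, length_mirror, Hm.2.2.1, mirror_compl_mirror] at h
        exact h
      have einner : List.foldl flipBit (true :: c ++ false :: d)
          ((c.length + 2) :: (π (mirror c)).map (fun a => c.length + 2 - a))
          = true :: (compl c ++ true :: d) := by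
        rw [List.foldl_cons, e1, hB]
        rw [show (true :: c ++ true :: d : List Bool) = true :: (c ++ true :: d) from rfl]
        rw [foldl_flip_cons true hL1 (c ++ true :: d)]
        rw [foldl_flip_append (true :: d) hL2, e2]
      rw [List.foldl_append, einner, hcompl, List.foldl_cons]
      have e3 : flipBit (true :: (compl c ++ true :: d)) 1 = false :: compl c ++ true :: d := by
        simp [flipBit]
      rw [e3]
      have hw : (false :: compl c ++ [true] : List Bool).length = c.length + 2 := by
        simp [length_compl]
      have e4 := foldl_flip_shift (L := π d) (false :: compl c ++ [true])
        (fun a ha => (Hd.1 a ha).1) d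
      rw [hw] at e4
      have e5 : (false :: compl c ++ [true]) ++ d = false :: compl c ++ true :: d := by simp
      rw [e5] at e4
      rw [e4, Hd.2.2.1]
      simp
    have Happ : ∀ v, isDyck v → π ((true :: c ++ false :: d) ++ v)
        = π (true :: c ++ false :: d) ++ (π v).map (fun a => (true :: c ++ false :: d).length + a) := by
      intro v hv
      have hav : (true :: c ++ false :: d) ++ v = true :: c ++ false :: (d ++ v) := by simp
      rw [hav, hπ.2 c (d ++ v) hc (isDyck_append hd hv), hspec, Hd.2.2.2 v hv]
      simp only [List.map_append, List.map_map]
      rw [hulen]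
      have hfun : ((fun a => c.length + 2 + a) ∘ (fun a => d.length + a))
          = (fun a => c.length + d.length + 2 + a) := by
        funext a; simp only [Function.comp]; omega
      rw [hfun]
      simp
    exact ⟨Hent, Hlen, Hfold, Happ⟩

lemma pi_entries {π : List Bool → List ℕ} (hπ : IsPiFun π) {u : List Bool} (hu : isDyck u) :
    ∀ a ∈ π u, 1 ≤ a ∧ a ≤ u.length :=
  (pi_main hπ u.length u le_rfl hu).1

lemma pi_length {π : List Bool → List ℕ} (hπ : IsPiFun π) {u : List Bool} (hu : isDyck u) :
    (π u).length = u.length :=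
  (pi_main hπ u.length u le_rfl hu).2.1

lemma pi_foldl {π : List Bool → List ℕ} (hπ : IsPiFun π) {u : List Bool} (hu : isDyck u) :
    List.foldl flipBit u (π u) = compl u :=
  (pi_main hπ u.length u le_rfl hu).2.2.1

lemma pi_append {π : List Bool → List ℕ} (hπ : IsPiFun π) {u v : List Bool}
    (hu : isDyck u) (hv : isDyck v) :
    π (u ++ v) = π u ++ (π v).map (fun a => u.length + a) :=
  (pi_main hπ u.length u le_rfl hu).2.2.2 v hv

lemma scanl_ne_nil' {α β : Type*} (f : β → α → β) (l : List α) (b : β) :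
    List.scanl f b l ≠ [] := by
  have := List.length_scanl (f := f) (init := b) (as := l)
  intro hc
  rw [hc] at this
  simp at this

lemma scanl_getLast {α β : Type*} (f : β → α → β) :
    ∀ (l : List α) (b : β) (h : List.scanl f b l ≠ []),
      (List.scanl f b l).getLast h = List.foldl f b l := by
  intro l
  induction l with
  | nil => intro b h; simp [List.scanl]
  | cons a l ih =>
    intro b h
    simp only [List.scanl_cons, List.foldl_cons]
    rw [List.getLast_cons (scanl_ne_nil' f l (f b a))]
    exact ih (f b a) _

lemma scanl_head {α β : Type*} (f : β → α → β) (l : List α) (b : β) (h : List.scanl f b l ≠ []) :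
    (List.scanl f b l).head h = b := by
  cases l <;> simp [List.scanl]

lemma scanl_ne_nil {α β : Type*} (f : β → α → β) (l : List α) (b : β) :
    List.scanl f b l ≠ [] := by
  have := List.length_scanl (f := f) (init := b) (as := l)
  intro hc
  rw [hc] at this
  simp at this

lemma append_tail_eq {α : Type*} (l m : List α) (hl : l ≠ []) (hm : m ≠ [])
    (h : l.getLast hl = m.head hm) : l ++ m.tail = l.dropLast ++ m := by
  conv_lhs => rw [← List.dropLast_append_getLast hl]
  rw [h, List.append_assoc]
  congr 1
  simpa using List.head_cons_tail m hm

lemma pathOf_length {π : List Bool → List ℕ} (hπ : IsPiFun π) {u : List Bool} (hu : isDyck u) :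
    (pathOf π u).length = u.length + 1 := by
  simp [pathOf, List.length_scanl, pi_length hπ hu]

lemma pathDec {π : List Bool → List ℕ} (hπ : IsPiFun π) {u v : List Bool}
    (hu : isDyck u) (hv : isDyck v) :
    pathOf π (u ++ v) = (List.scanl flipBit (u ++ v) (π u)).dropLast
      ++ (pathOf π v).map (fun z => compl u ++ z) := by
  unfold pathOf
  rw [pi_append hπ hu hv, _root_.scanl_append]
  have hfold : List.foldl flipBit (u ++ v) (π u) = compl u ++ v := by
    rw [foldl_flip_append v (pi_entries hπ hu), pi_foldl hπ hu]
  rw [hfold]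
  have hsh : List.scanl flipBit (compl u ++ v) ((π v).map (fun a => u.length + a))
      = (List.scanl flipBit v (π v)).map (fun z => compl u ++ z) := by
    have h := scanl_flip_shift (L := π v) (compl u) (fun a ha => (pi_entries hπ hv a ha).1) v
    rw [length_compl] at h
    exact h
  rw [hsh]
  exact append_tail_eq _ _ (scanl_ne_nil _ _ _) (by simp [_root_.scanl_ne_nil])
    (by rw [scanl_getLast, hfold, List.head_map, scanl_head])

lemma getD_map_lt {α β : Type*} {f : α → β} {l : List α} {j : ℕ} (h : j < l.length)
    (d : β) (d' : α) : (l.map f).getD j d = f (l.getD j d') := by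
  rw [List.getD_eq_getElem _ _ (by simpa using h), List.getElem_map,
    List.getD_eq_getElem _ _ h]

lemma getD_pathOf_append {π : List Bool → List ℕ} (hπ : IsPiFun π) {u v : List Bool}
    (hu : isDyck u) (hv : isDyck v) {j : ℕ} (hj : j < v.length + 1) :
    (pathOf π (u ++ v)).getD (u.length + j) [] = compl u ++ (pathOf π v).getD j [] := by
  rw [pathDec hπ hu hv]
  have hlen : ((List.scanl flipBit (u ++ v) (π u)).dropLast).length = u.length := by
    simp [List.length_scanl, pi_length hπ hu]
  rw [List.getD_append_right _ _ _ _ (by omega), hlen, Nat.add_sub_cancel_left]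
  exact getD_map_lt (by rw [pathOf_length hπ hv]; omega) _ []

lemma indexOf_shift (s m : ℕ) (l : List ℕ) :
    List.idxOf (s + m) (l.map (fun a => s + a)) = List.idxOf m l := by
  induction l with
  | nil => simp
  | cons a l ih =>
    by_cases h : a = m
    · subst h
      simp [List.idxOf_cons]
    · simp only [List.map_cons, List.idxOf_cons, ih]
      have h2 : ((s + a : ℕ) == (s + m)) = false := by
        simp only [beq_eq_false_iff_ne, ne_eq]
        omega
      have h3 : ((a : ℕ) == m) = false := by
        simp only [beq_eq_false_iff_ne, ne_eq]
        exact h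
      rw [h2, h3]

lemma edgeOf_append {π : List Bool → List ℕ} (hπ : IsPiFun π) {u x : List Bool}
    (hu : isDyck u) (hx : isDyck x) {m : ℕ} (hm : m ∈ π x) :
    edgeOf π (u ++ x) (u.length + m) = Sym2.map (fun z => compl u ++ z) (edgeOf π x m) := by
  have hm1 : 1 ≤ m := (pi_entries hπ hx m hm).1
  have hnotmem : (u.length + m) ∉ π u := by
    intro hc
    have := pi_entries hπ hu _ hc
    omega
  have hidx : (π (u ++ x)).idxOf (u.length + m) = u.length + (π x).idxOf m := by
    rw [pi_append hπ hu hx, List.idxOf_append_of_notMem hnotmem, pi_length hπ hu,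
      indexOf_shift]
  have hidxlt : (π x).idxOf m < (π x).length := List.idxOf_lt_length_iff.2 hm
  rw [pi_length hπ hx] at hidxlt
  unfold edgeOf
  rw [hidx, getD_pathOf_append hπ hu hx (by omega),
    show u.length + (π x).idxOf m + 1 = u.length + ((π x).idxOf m + 1) from by omega,
    getD_pathOf_append hπ hu hx (by omega), Sym2.map_pair_eq]

lemma mem_zipWith {α β γ : Type*} {f : α → β → γ} :
    ∀ {l : List α} {l' : List β} {c : γ}, c ∈ List.zipWith f l l' →
      ∃ a b, a ∈ l ∧ b ∈ l' ∧ c = f a b := by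
  intro l
  induction l with
  | nil => intro l' c hc; simp at hc
  | cons a l ih =>
    intro l' c hc
    cases l' with
    | nil => simp at hc
    | cons b l' =>
      simp only [List.zipWith_cons_cons, List.mem_cons] at hc
      rcases hc with rfl | hc
      · exact ⟨a, b, by simp, by simp, rfl⟩
      · obtain ⟨a', b', ha, hb, rfl⟩ := ih hc
        exact ⟨a', b', by simp [ha], by simp [hb], rfl⟩

lemma mem_of_cycEdges {e : Sym2 (List Bool)} {l : List (List Bool)}
    (he : e ∈ cycEdges l) : ∀ w ∈ e, w ∈ l := by
  obtain ⟨a, b, ha, hb, rfl⟩ := mem_zipWith he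
  intro w hw
  rcases Sym2.mem_iff.1 hw with rfl | rfl
  · exact ha
  · exact List.mem_rotate.1 hb

lemma cycEdges_map (f : List Bool → List Bool) (l : List (List Bool)) :
    cycEdges (l.map f) = (cycEdges l).map (Sym2.map f) := by
  unfold cycEdges
  rw [← List.map_rotate, List.zipWith_map, List.map_zipWith]
  simp [Sym2.map_pair_eq]

lemma mem_edgesOf_iff {e : Sym2 (List Bool)} {l : List (List Bool)} :
    e ∈ edgesOf l ↔ ∃ i, i + 1 < l.length ∧ e = s(l.getD i [], l.getD (i+1) []) := by
  unfold edgesOf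
  rw [List.mem_iff_getElem]
  constructor
  · rintro ⟨i, hlt, rfl⟩
    have hlen : i + 1 < l.length := by
      rw [List.length_zipWith, List.length_tail, lt_min_iff] at hlt
      omega
    refine ⟨i, hlen, ?_⟩
    rw [List.getElem_zipWith, List.getElem_tail,
      List.getD_eq_getElem _ _ (by omega), List.getD_eq_getElem _ _ hlen]
  · rintro ⟨i, hlen, rfl⟩
    refine ⟨i, ?_, ?_⟩
    · rw [List.length_zipWith, List.length_tail, lt_min_iff]
      omega
    · rw [List.getElem_zipWith, List.getElem_tail,
        List.getD_eq_getElem _ _ (by omega), List.getD_eq_getElem _ _ hlen]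

lemma dyck_half {u : List Bool} (hu : isDyck u) :
    u.count true = u.length / 2 ∧ u.count false = u.length / 2 ∧
      u.length = 2 * (u.length / 2) := by
  have h1 := length_eq_count u
  have h2 := hu.1
  omega

lemma inB_append {u : List Bool} (hu : isDyck u) {k : ℕ} {a : List Bool} (ha : inB k a) :
    inB (k + u.length / 2) (compl u ++ a) := by
  obtain ⟨hlen, hcnt⟩ := ha
  have hh := dyck_half hu
  constructor
  · rw [List.length_append, length_compl, hlen]
    omega
  · rw [List.count_append, count_compl]
    simp only [Bool.not_true]
    rcases hcnt with h | h
    · left; omega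
    · right; omega

lemma GkAdj_append {u : List Bool} (hu : isDyck u) {k : ℕ} {a b : List Bool}
    (hab : GkAdj k a b) :
    GkAdj (k + u.length / 2) (compl u ++ a) (compl u ++ b) := by
  obtain ⟨ha, hb, hcount⟩ := hab
  refine ⟨inB_append hu ha, inB_append hu hb, ?_⟩
  have h2 : 2 * (k + u.length / 2) = u.length + 2 * k := by
    have := dyck_half hu
    omega
  rw [h2, List.range_add, List.countP_append, List.countP_map]
  have e1 : (List.range u.length).countP
      (fun i => ((compl u ++ a).getD i false != (compl u ++ b).getD i false)) = 0 := by
    rw [List.countP_eq_zero]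
    intro i hi
    rw [List.mem_range] at hi
    have hiu : i < (compl u).length := by rw [length_compl]; exact hi
    rw [List.getD_append _ _ _ _ hiu, List.getD_append _ _ _ _ hiu]
    simp
  rw [e1, Nat.zero_add]
  rw [List.countP_congr ?_]
  · exact hcount
  intro i _
  simp only [Function.comp]
  have hle : (compl u).length ≤ u.length + i := by rw [length_compl]; omega
  rw [List.getD_append_right _ _ _ _ hle, List.getD_append_right _ _ _ _ hle,
    length_compl, Nat.add_sub_cancel_left]

lemma mem_ys_inB {k : ℕ} {ys : List (List Bool)} (hchain : List.Chain' (GkAdj k) ys)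
    (hcyc : ∀ h : ys ≠ [], GkAdj k (ys.getLast h) (ys.head h)) :
    ∀ w ∈ ys, inB k w := by
  intro w hw
  obtain ⟨i, hi, rfl⟩ := List.mem_iff_getElem.1 hw
  by_cases hlast : i + 1 < ys.length
  · have h := List.isChain_iff_getElem.1 hchain i (by omega)
    exact h.1
  · have hne : ys ≠ [] := by
      intro hc
      subst hc
      simp at hi
    have h := hcyc hne
    rw [List.getLast_eq_getElem] at h
    have hieq : ys.length - 1 = i := by omega
    simp only [hieq] at h
    exact h.1

lemma getD_zero_set {w : List Bool} {j : ℕ} (hj : j ≠ 0) (b : Bool) :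
    (w.set j b).getD 0 false = w.getD 0 false := by
  cases w with
  | nil => simp
  | cons c t =>
    cases j with
    | zero => omega
    | succ j => simp

lemma compl_getD {l : List Bool} {p : ℕ} (h : p < l.length) :
    (compl l).getD p false = !(l.getD p false) := by
  unfold _root_.compl
  rw [List.getD_eq_getElem _ _ (by simpa using h), List.getD_eq_getElem _ _ h,
    List.getElem_map]

lemma isDyck_take {x : List Bool} (hx : isDyck x) {n : ℕ}
    (hbal : (x.take n).count true = (x.take n).count false) : isDyck (x.take n) := by
  refine ⟨hbal, fun j => ?_⟩
  rw [List.take_take]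
  rcases le_total j n with h | h
  · rw [min_eq_left h]
    exact hx.2 j
  · rw [min_eq_right h]
    omega

lemma dyck_prefix_false_contra {a c : List Bool} (ha : isDyck a)
    (hcbal : c.count true = c.count false) (hlen : c.length < a.length)
    (hpref : a.take c.length = c) (hbit : a.getD c.length false = false) : False := by
  have htake : a.take (c.length+1) = c ++ [false] := by
    rw [List.take_succ, hpref, List.getElem?_eq_getElem hlen]
    rw [List.getD_eq_getElem _ _ hlen] at hbit
    simp [hbit]
  have h2 := ha.2 (c.length + 1)
  rw [htake] at h2
  simp [List.count_append] at h2
  omega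

lemma pathOf_vertex_length {π : List Bool → List ℕ} {x : List Bool} :
    ∀ w ∈ pathOf π x, w.length = x.length :=
  scanl_invariant (fun w e _ hw => by rw [length_flipBit]; exact hw) rfl

lemma fcLen (c : List Bool) : ((false :: compl c) ++ [true] : List Bool).length = c.length + 2 := by
  simp [length_compl]

lemma fcLen2 (c : List Bool) : ((false :: compl c) : List Bool).length = c.length + 1 := by
  simp [length_compl]

lemma E_L {a w : List Bool} {p : ℕ} (hp : p < a.length) :
    ((((false :: compl a) ++ [true]) ++ w)).getD (p+1) false = !(a.getD p false) := by
  rw [List.getD_append _ _ _ _ (by rw [fcLen]; omega),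
    List.getD_append _ _ _ _ (by rw [fcLen2]; omega),
    List.getD_cons_succ, compl_getD hp]

lemma E_Ltrue (a w : List Bool) :
    ((((false :: compl a) ++ [true]) ++ w)).getD (a.length+1) false = true := by
  rw [List.getD_append _ _ _ _ (by rw [fcLen]; omega),
    List.getD_append_right _ _ _ _ (by rw [fcLen2]), fcLen2,
    show a.length + 1 - (a.length + 1) = 0 from by omega]
  rfl

lemma E_R {c d : List Bool} {p : ℕ} (hp : p < c.length) :
    ((false :: compl c) ++ (true :: compl d)).getD (p+1) false = !(c.getD p false) := by
  rw [List.getD_append _ _ _ _ (by rw [fcLen2]; omega),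
    List.getD_cons_succ, compl_getD hp]

lemma E_Rtrue (c d : List Bool) :
    ((false :: compl c) ++ (true :: compl d)).getD (c.length+1) false = true := by
  rw [List.getD_append_right _ _ _ _ (by rw [fcLen2]), fcLen2,
    show c.length + 1 - (c.length + 1) = 0 from by omega]
  rfl

lemma E_eq_len {a c d w : List Bool} (ha : isDyck a) (hc : isDyck c)
    (E : ∀ p, p < c.length + d.length + 2 →
      (((false :: compl a) ++ [true]) ++ w).getD p false
        = ((false :: compl c) ++ (true :: compl d)).getD p false) :
    c = a := by
  rcases lt_trichotomy c.length a.length with hlt | heq | hgt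
  · exfalso
    have hpref : a.take c.length = c := by
      apply List.ext_getElem (by simp; omega)
      intro p hp1 hp2
      have hp : p < c.length := by simpa using hp2
      have hE := E (p+1) (by omega)
      rw [E_L (by omega), E_R hp] at hE
      have h3 := Bool.not_inj hE
      rw [List.getD_eq_getElem _ _ (by omega), List.getD_eq_getElem _ _ hp] at h3
      rw [List.getElem_take]
      exact h3
    have hbit : a.getD c.length false = false := by
      have hE := E (c.length+1) (by omega)
      rw [E_L hlt, E_Rtrue] at hE
      cases h : a.getD c.length false
      · rfl
      · rw [h] at hE
        simp at hE
    exact dyck_prefix_false_contra ha hc.1 hlt hpref hbit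
  · apply List.ext_getElem heq
    intro p hp1 hp2
    have hE := E (p+1) (by omega)
    rw [E_L (by omega), E_R (by omega)] at hE
    have h3 := Bool.not_inj hE
    rw [List.getD_eq_getElem _ _ (by omega), List.getD_eq_getElem _ _ (by omega)] at h3
    exact h3.symm
  · exfalso
    have hpref : c.take a.length = a := by
      apply List.ext_getElem (by simp; omega)
      intro p hp1 hp2
      have hp : p < a.length := by simpa using hp2
      have hE := E (p+1) (by omega)
      rw [E_L hp, E_R (by omega)] at hE
      have h3 := Bool.not_inj hE
      rw [List.getD_eq_getElem _ _ hp, List.getD_eq_getElem _ _ (by omega)] at h3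
      rw [List.getElem_take]
      exact h3.symm
    have hbit : c.getD a.length false = false := by
      have hE := E (a.length+1) (by omega)
      rw [E_Ltrue, E_R hgt] at hE
      cases h : c.getD a.length false
      · rfl
      · rw [h] at hE
        simp at hE
    exact dyck_prefix_false_contra hc ha.1 hgt hpref hbit

lemma E_suffix {c d w : List Bool} (hlen : d.length ≤ w.length)
    (E : ∀ p, p < c.length + d.length + 2 →
      (((false :: compl c) ++ [true]) ++ w).getD p false
        = ((false :: compl c) ++ (true :: compl d)).getD p false) :
    w.take d.length = compl d := by
  apply List.ext_getElem (by simp [length_compl]; omega)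
  intro q hq1 hq2
  have hqd : q < d.length := by
    rw [length_compl] at hq2
    exact hq2
  have hE := E (c.length + 2 + q) (by omega)
  rw [List.getD_append_right _ _ _ _ (by rw [fcLen]; omega), fcLen,
    show c.length + 2 + q - (c.length + 2) = q from by omega,
    List.getD_append_right _ _ _ _ (by rw [fcLen2]; omega), fcLen2,
    show c.length + 2 + q - (c.length + 1) = q + 1 from by omega,
    List.getD_cons_succ] at hE
  rw [List.getElem_take, ← List.getD_eq_getElem w false (by omega),
    ← List.getD_eq_getElem (compl d) false hq2, hE]

lemma lemK {π : List Bool → List ℕ} (hπ : IsPiFun π) :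
    ∀ N u, u.length ≤ N → isDyck u → ∀ x', isDyck x' →
    ∀ i, i + 1 < (pathOf π x').length →
    ((pathOf π x').getD i []).take u.length = compl u →
    ((pathOf π x').getD (i+1) []).take u.length = compl u →
    u <+: x' ∧ u.length ≤ i ∧
    (pathOf π x').getD i [] =
      compl u ++ (pathOf π (x'.drop u.length)).getD (i - u.length) [] ∧
    (pathOf π x').getD (i+1) [] =
      compl u ++ (pathOf π (x'.drop u.length)).getD (i + 1 - u.length) [] := by
  intro N
  induction N with
  | zero =>
    intro u hlen hu x' hx' i hi h1 h2
    have hu0 : u = [] := List.length_eq_zero_iff.mp (Nat.le_zero.mp hlen)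
    subst hu0
    simp only [List.length_nil, List.drop_zero, List.nil_append, Nat.sub_zero,
      List.nil_prefix, Nat.zero_le, true_and]
    exact ⟨by simp [compl_nil], by simp [compl_nil]⟩
  | succ N ih =>
    intro u hlen hu x' hx' i hi h1 h2
    by_cases hnil : u = []
    · subst hnil
      simp only [List.length_nil, List.drop_zero, List.nil_append, Nat.sub_zero,
        List.nil_prefix, Nat.zero_le, true_and]
      exact ⟨by simp [compl_nil], by simp [compl_nil]⟩
    obtain ⟨c, d, hc, hd, rfl⟩ := dyck_decomp hu hnil
    have hulen : (true :: c ++ false :: d).length = c.length + d.length + 2 := by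
      simp only [List.length_cons, List.length_append]
      omega
    rw [hulen] at hlen
    -- x' nonempty
    have hx'nil : x' ≠ [] := by
      intro hcon
      subst hcon
      rw [pathOf_length hπ isDyck_nil] at hi
      simp only [List.length_nil] at hi
      omega
    obtain ⟨a, v, ha, hv, rfl⟩ := dyck_decomp hx' hx'nil
    -- u₀ := true :: a ++ [false]
    have hx'eq : (true :: a ++ false :: v : List Bool) = (true :: a ++ [false]) ++ v := by
      simp
    have hu₀bal : ((true :: a ++ [false] : List Bool)).count true
        = ((true :: a ++ [false] : List Bool)).count false := by
      simp [List.count_append, List.count_cons, ha.1]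
    have hu₀take : ((true :: a ++ false :: v : List Bool)).take (a.length + 2)
        = true :: a ++ [false] := by
      rw [List.take_append]
      have e1 : ((true :: a : List Bool)).take (a.length + 2) = true :: a :=
        List.take_of_length_le (by simp)
      have e2 : a.length + 2 - (true :: a : List Bool).length = 1 := by simp
      rw [e1, e2]
      simp
    have hu₀ : isDyck (true :: a ++ [false]) := by
      rw [← hu₀take]
      exact isDyck_take hx' (by rw [hu₀take]; exact hu₀bal)
    have hu₀len : ((true :: a ++ [false] : List Bool)).length = a.length + 2 := by
      simp
    -- decomposition of the path
    have hdec : pathOf π (true :: a ++ false :: v)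
        = (List.scanl flipBit ((true :: a ++ [false]) ++ v) (π (true :: a ++ [false]))).dropLast
          ++ (pathOf π v).map (fun z => compl (true :: a ++ [false]) ++ z) := by
      rw [hx'eq]
      exact pathDec hπ hu₀ hv
    -- π u₀
    have hπu₀ : π (true :: a ++ [false])
        = ((a.length + 2) :: (π (mirror a)).map (fun b => a.length + 2 - b)) ++ [1] := by
      have hspec := hπ.2 a [] ha isDyck_nil
      rw [hπ.1] at hspec
      simpa using hspec
    -- the pre part
    have hpre : (List.scanl flipBit ((true :: a ++ [false]) ++ v) (π (true :: a ++ [false]))).dropLast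
        = List.scanl flipBit ((true :: a ++ [false]) ++ v)
            ((a.length + 2) :: (π (mirror a)).map (fun b => a.length + 2 - b)) := by
      rw [hπu₀, _root_.scanl_append]
      have : (List.scanl flipBit
          (List.foldl flipBit ((true :: a ++ [false]) ++ v)
            ((a.length + 2) :: (π (mirror a)).map (fun b => a.length + 2 - b))) [1]).tail
          = [flipBit (List.foldl flipBit ((true :: a ++ [false]) ++ v)
              ((a.length + 2) :: (π (mirror a)).map (fun b => a.length + 2 - b))) 1] := by
        simp [List.scanl]
      rw [this, List.dropLast_concat]
    have hprelen : (List.scanl flipBit ((true :: a ++ [false]) ++ v)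
        ((a.length + 2) :: (π (mirror a)).map (fun b => a.length + 2 - b))).length
        = a.length + 2 := by
      rw [List.length_scanl]
      simp [pi_length hπ (isDyck_mirror ha), length_mirror]
    -- first bit of pre vertices is true
    have hfirst : ∀ w ∈ List.scanl flipBit ((true :: a ++ [false]) ++ v)
        ((a.length + 2) :: (π (mirror a)).map (fun b => a.length + 2 - b)),
        w.getD 0 false = true := by
      apply scanl_invariant
      · intro w e he hw
        have he2 : 2 ≤ e := by
          rcases List.mem_cons.1 he with rfl | he
          · omega
          · obtain ⟨b, hb, rfl⟩ := List.mem_map.1 he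
            have := pi_entries hπ (isDyck_mirror ha) b hb
            rw [length_mirror] at this
            omega
        unfold flipBit
        rw [getD_zero_set (by omega)]
        exact hw
      · rfl
    -- total lengths
    have hx'len2 : (true :: a ++ false :: v : List Bool).length = a.length + v.length + 2 := by
      simp only [List.length_cons, List.length_append]
      omega
    have hx'len : (pathOf π (true :: a ++ false :: v)).length = a.length + v.length + 3 := by
      rw [pathOf_length hπ hx', hx'len2]
    rw [hx'len] at hi
    have hvlen : (pathOf π v).length = v.length + 1 := pathOf_length hπ hv
    have hcomplu : compl (true :: c ++ false :: d) = (false :: compl c) ++ (true :: compl d) := by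
      rw [show (true :: c ++ false :: d : List Bool) = (true :: c) ++ (false :: d) from rfl,
        compl_append]
      rfl
    have hcomplu₀ : compl (true :: a ++ [false]) = (false :: compl a) ++ [true] := by
      rw [show (true :: a ++ [false] : List Bool) = (true :: a) ++ [false] from rfl,
        compl_append]
      rfl
    -- i is at least a.length + 2
    have hige : a.length + 2 ≤ i := by
      by_contra hcon
      push_neg at hcon
      have hvtx : (pathOf π (true :: a ++ false :: v)).getD i []
          ∈ List.scanl flipBit ((true :: a ++ [false]) ++ v)
            ((a.length + 2) :: (π (mirror a)).map (fun b => a.length + 2 - b)) := by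
        rw [hdec, hpre, List.getD_append _ _ _ _ (by rw [hprelen]; omega)]
        rw [List.getD_eq_getElem _ _ (by rw [hprelen]; omega)]
        exact List.getElem_mem _
      have hbit := hfirst _ hvtx
      have hbit2 : ((pathOf π (true :: a ++ false :: v)).getD i []).getD 0 false = false := by
        have hcg := congrArg (fun l => l.getD 0 false) h1
        rw [getD_take (by rw [hulen]; omega)] at hcg
        rw [hcg, hcomplu]
        rfl
      rw [hbit] at hbit2
      exact absurd hbit2 (by simp)
    have hjlt : (i - (a.length + 2)) + 1 < (pathOf π v).length := by
      rw [hvlen]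
      omega
    -- vertex expressions
    have hvtxi : (pathOf π (true :: a ++ false :: v)).getD i []
        = compl (true :: a ++ [false]) ++ (pathOf π v).getD (i - (a.length+2)) [] := by
      rw [hdec, hpre, List.getD_append_right _ _ _ _ (by rw [hprelen]; omega), hprelen]
      exact getD_map_lt (by rw [hvlen]; omega) _ []
    have hvtxi1 : (pathOf π (true :: a ++ false :: v)).getD (i+1) []
        = compl (true :: a ++ [false]) ++ (pathOf π v).getD (i - (a.length+2) + 1) [] := by
      rw [hdec, hpre, List.getD_append_right _ _ _ _ (by rw [hprelen]; omega), hprelen,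
        show i + 1 - (a.length + 2) = i - (a.length+2) + 1 from by omega]
      exact getD_map_lt (by rw [hvlen]; omega) _ []
    -- lengths of the path vertices
    have hwlen : ((pathOf π v).getD (i - (a.length+2)) []).length = v.length := by
      rw [List.getD_eq_getElem _ _ (by omega)]
      exact pathOf_vertex_length _ (List.getElem_mem _)
    have hw'len : ((pathOf π v).getD (i - (a.length+2) + 1) []).length = v.length := by
      rw [List.getD_eq_getElem _ _ (by omega)]
      exact pathOf_vertex_length _ (List.getElem_mem _)
    -- the pointwise prefix equations
    rw [hvtxi, hcomplu₀, hulen, hcomplu] at h1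
    rw [hvtxi1, hcomplu₀, hulen, hcomplu] at h2
    have E1 : ∀ p, p < c.length + d.length + 2 →
        (((false :: compl a) ++ [true]) ++ (pathOf π v).getD (i - (a.length+2)) []).getD p false
          = ((false :: compl c) ++ (true :: compl d)).getD p false := by
      intro p hp
      have hcg := congrArg (fun l => l.getD p false) h1
      rw [getD_take hp] at hcg
      exact hcg
    have E2 : ∀ p, p < c.length + d.length + 2 →
        (((false :: compl a) ++ [true]) ++ (pathOf π v).getD (i - (a.length+2) + 1) []).getD p false
          = ((false :: compl c) ++ (true :: compl d)).getD p false := by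
      intro p hp
      have hcg := congrArg (fun l => l.getD p false) h2
      rw [getD_take hp] at hcg
      exact hcg
    have hca : c = a := E_eq_len ha hc E1
    subst hca
    -- d fits in the suffix
    have hdlen : d.length ≤ v.length := by
      have hcg := congrArg List.length h1
      simp only [List.length_take, List.length_append, fcLen2, List.length_cons,
        length_compl, List.length_nil, hwlen] at hcg
      rw [Nat.min_def] at hcg
      split at hcg <;> omega
    have hwd := E_suffix (by rw [hwlen]; exact hdlen) E1
    have hw'd := E_suffix (by rw [hw'len]; exact hdlen) E2
    have hIH := ih d (by omega) hd v hv (i - (c.length+2)) hjlt hwd hw'd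
    obtain ⟨⟨t, htv⟩, hdj, hj1, hj2⟩ := hIH
    have hupre : (true :: c ++ false :: d) ++ t = true :: c ++ false :: v := by
      rw [← htv]
      simp
    have hdropeq : (true :: c ++ false :: v).drop (c.length + d.length + 2) = v.drop d.length := by
      have hl1 : (true :: c ++ [false] : List Bool).length = c.length + 2 := by
        simp only [List.length_append, List.length_cons, List.length_nil]
      have hs1 : (true :: c ++ false :: v : List Bool) = (true :: c ++ [false]) ++ v := by simp
      have hs2 : (true :: c ++ [false] : List Bool).drop (c.length + d.length + 2) = [] :=
        List.drop_eq_nil_of_le (by omega)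
      rw [hs1, List.drop_append, hs2, hl1,
        show c.length + d.length + 2 - (c.length + 2) = d.length from by omega]
      rfl
    refine ⟨⟨t, hupre⟩, by rw [hulen]; omega, ?_, ?_⟩
    · rw [hvtxi, hj1, hulen, hdropeq,
        show i - (c.length + d.length + 2) = i - (c.length+2) - d.length from by omega,
        show compl (true :: c ++ false :: d)
          = compl (true :: c ++ [false]) ++ compl d from by rw [← compl_append]; simp,
        List.append_assoc]
    · rw [hvtxi1, hj2, hulen, hdropeq,
        show i + 1 - (c.length + d.length + 2) = i - (c.length+2) + 1 - d.length from by omega,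
        show compl (true :: c ++ false :: d)
          = compl (true :: c ++ [false]) ++ compl d from by rw [← compl_append]; simp,
        List.append_assoc]

end Aux

theorem stmt_16 (π : List Bool → List ℕ) (hπ : IsPiFun π) (k : ℕ)
    (τ : Finset (List Bool × ℕ)) (ys : List (List Bool))
    (hτ : IsFlippableTuple π k τ) (hys : IsFlippingCycleFor π k τ ys)
    (u : List Bool) (hu : isDyck u) :
    IsFlippableTuple π (k + u.length / 2) (τ.image (fun p => (u ++ p.1, u.length + p.2)))
    ∧ IsFlippingCycleFor π (k + u.length / 2)
        (τ.image (fun p => (u ++ p.1, u.length + p.2)))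
        (ys.map (fun y => compl u ++ y)) := by
  classical
  obtain ⟨hcard, hτmem, hτinj, _⟩ := hτ
  obtain ⟨hnodup, hlen, hchain, hwrap, hedges, hcomplete⟩ := hys
  have hinj : Function.Injective (fun y : List Bool => compl u ++ y) :=
    fun y z h => List.append_cancel_left h
  have huhalf := dyck_half hu
  have hk2 : 2 * (k + u.length / 2) = u.length + 2 * k := by omega
  have hk1 : 1 ≤ k := by
    obtain ⟨p, hp⟩ := Finset.card_pos.mp (by omega : 0 < τ.card)
    have := hτmem p hp
    omega
  have hysinB : ∀ w ∈ ys, inB k w := mem_ys_inB hchain hwrap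
  have hmem_pi : ∀ p ∈ τ, p.2 ∈ π p.1 := by
    intro p hp
    obtain ⟨hpd, hplen, hp1, hp2⟩ := hτmem p hp
    by_contra hcon
    have hidx : (π p.1).idxOf p.2 = (π p.1).length := List.idxOf_eq_length_iff.2 hcon
    have hedge := hedges p hp
    have hnil2 : (pathOf π p.1).getD ((π p.1).idxOf p.2 + 1) [] = [] := by
      apply List.getD_eq_default
      rw [hidx, pathOf_length hπ hpd, pi_length hπ hpd]
    have hnilmem : ([] : List Bool) ∈ edgeOf π p.1 p.2 := by
      unfold edgeOf
      rw [hnil2]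
      exact Sym2.mem_iff.2 (Or.inr rfl)
    have hys0 : ([] : List Bool) ∈ ys := mem_of_cycEdges hedge _ hnilmem
    obtain ⟨hl, _⟩ := hysinB _ hys0
    simp only [List.length_nil] at hl
    omega
  have hginj : Function.Injective (fun p : List Bool × ℕ => (u ++ p.1, u.length + p.2)) := by
    intro p q h
    simp only [Prod.mk.injEq] at h
    exact Prod.ext (List.append_cancel_left h.1) (by omega)
  have hcardim : (τ.image (fun p => (u ++ p.1, u.length + p.2))).card = τ.card :=
    Finset.card_image_of_injective τ hginj
  have hft : ∀ w : List Bool, (compl u ++ w).take u.length = compl u :=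
    fun w => List.take_left' (length_compl u)
  -- the new flipping cycle
  have HFC : IsFlippingCycleFor π (k + u.length / 2)
      (τ.image (fun p => (u ++ p.1, u.length + p.2)))
      (ys.map (fun y => compl u ++ y)) := by
    refine ⟨hnodup.map hinj, ?_, ?_, ?_, ?_, ?_⟩
    · rw [List.length_map, hcardim]
      exact hlen
    · exact (List.isChain_map _).2 (hchain.imp (fun a b hab => GkAdj_append hu hab))
    · intro h
      have hysne : ys ≠ [] := by
        intro hc
        rw [hc] at h
        simp at h
      rw [List.getLast_map h, List.head_map h]
      exact GkAdj_append hu (hwrap hysne)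
    · intro p' hp'
      obtain ⟨p, hp, rfl⟩ := Finset.mem_image.1 hp'
      rw [edgeOf_append hπ hu (hτmem p hp).1 (hmem_pi p hp), cycEdges_map]
      exact List.mem_map_of_mem (hedges p hp)
    · intro x'' hx'' hx''len e he hee
      rw [cycEdges_map] at he
      obtain ⟨e₁, he₁, rfl⟩ := List.mem_map.1 he
      obtain ⟨a₀, b₀, ha₀, hb₀r, rfl⟩ := mem_zipWith he₁
      have hb₀ : b₀ ∈ ys := List.mem_rotate.1 hb₀r
      rw [Sym2.map_pair_eq] at hee ⊢
      obtain ⟨i, hilt, hei⟩ := mem_edgesOf_iff.1 hee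
      have htake_i : ((pathOf π x'').getD i []).take u.length = compl u := by
        rcases Sym2.eq_iff.1 hei with ⟨hA, _⟩ | ⟨_, hB⟩
        · rw [← hA]; exact hft a₀
        · rw [← hB]; exact hft b₀
      have htake_i1 : ((pathOf π x'').getD (i+1) []).take u.length = compl u := by
        rcases Sym2.eq_iff.1 hei with ⟨_, hB⟩ | ⟨hA, _⟩
        · rw [← hB]; exact hft b₀
        · rw [← hA]; exact hft a₀
      obtain ⟨⟨t, ht⟩, hui, hvi, hvi1⟩ :=
        lemK hπ u.length u le_rfl hu x'' hx'' i hilt htake_i htake_i1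
      have htdrop : x''.drop u.length = t := by
        rw [← ht, List.drop_left]
      have hxd : isDyck t := isDyck_of_append hu (ht ▸ hx'')
      have htlen : t.length = 2 * k := by
        have := congrArg List.length ht
        simp only [List.length_append] at this
        omega
      have hpx'' : (pathOf π x'').length = x''.length + 1 := pathOf_length hπ hx''
      have hpt : (pathOf π t).length = t.length + 1 := pathOf_length hπ hxd
      have hbound : i - u.length + 1 < (pathOf π t).length := by
        rw [hpt]
        rw [hpx''] at hilt
        have := congrArg List.length ht
        simp only [List.length_append] at this
        omega
      rw [htdrop] at hvi hvi1
      have he₀path : s((pathOf π t).getD (i - u.length) [],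
          (pathOf π t).getD (i - u.length + 1) []) ∈ edgesOf (pathOf π t) := by
        apply mem_edgesOf_iff.2
        exact ⟨i - u.length, hbound, rfl⟩
      have hiu1 : i + 1 - u.length = i - u.length + 1 := by omega
      have he₀eq : Sym2.map (fun y => compl u ++ y)
          (s((pathOf π t).getD (i - u.length) [], (pathOf π t).getD (i - u.length + 1) []))
          = Sym2.map (fun y => compl u ++ y) s(a₀, b₀) := by
        rw [Sym2.map_pair_eq, Sym2.map_pair_eq]
        rw [← hvi, ← hiu1, ← hvi1]
        exact hei.symm
      have he₀cyc : s((pathOf π t).getD (i - u.length) [],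
          (pathOf π t).getD (i - u.length + 1) []) ∈ cycEdges ys := by
        rw [Sym2.map.injective hinj he₀eq]
        exact he₁
      obtain ⟨m, hmτ, hme⟩ := hcomplete t hxd htlen _ he₀cyc he₀path
      have hmem : m ∈ π t := hmem_pi (t, m) hmτ
      refine ⟨u.length + m, ?_, ?_⟩
      · apply Finset.mem_image.2
        refine ⟨(t, m), hmτ, ?_⟩
        simp [ht]
      · have := edgeOf_append hπ hu hxd hmem
        rw [ht] at this
        rw [this, ← hme, he₀eq, Sym2.map_pair_eq]
  constructor
  · refine ⟨by rw [hcardim]; exact hcard, ?_, ?_, ?_⟩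
    · intro p' hp'
      obtain ⟨p, hp, rfl⟩ := Finset.mem_image.1 hp'
      obtain ⟨hpd, hplen, hp1, hp2⟩ := hτmem p hp
      refine ⟨isDyck_append hu hpd, ?_, by omega, by omega⟩
      simp only [List.length_append, hplen]
      omega
    · intro p' hp' q' hq' hfst
      obtain ⟨p, hp, rfl⟩ := Finset.mem_image.1 hp'
      obtain ⟨q, hq, rfl⟩ := Finset.mem_image.1 hq'
      simp only at hfst
      have := hτinj p hp q hq (List.append_cancel_left hfst)
      rw [this]
    · exact ⟨ys.map (fun y => compl u ++ y), HFC⟩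
  · exact HFC
end
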